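/- arXiv:1406.2843 — 11 statements merged into one kernel-verified Lean document; each statement's English description precedes it below -/
import Mathlib

section
/- If f is a polynomial of degree at most n with real coefficients all of whose complex zeros lie outside the open unit disk (i.e., every root z satisfies |z| ≥ 1), then either f or -f can be written in the form Σ_{j=0}^n a_j (1-x)^j (x+1)^{n-j} with all coefficients a_j ≥ 0. -/
open Finset Polynomial

private def Lor (n : ℕ) (f : ℝ → ℝ) : Prop :=
  ∃ A : ℕ → ℝ, (∀ j ≤ n, 0 ≤ A j) ∧
    ∀ x : ℝ, f x = ∑ j ∈ range (n + 1), A j * (1 - x) ^ j * (x + 1) ^ (n - j)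

private lemma Lor_ext {n : ℕ} {f g : ℝ → ℝ} (h : ∀ x, f x = g x) (hf : Lor n f) : Lor n g := by
  obtain ⟨A, hA, hx⟩ := hf
  exact ⟨A, hA, fun x => by rw [← h x]; exact hx x⟩

private lemma Lor_mul {n m : ℕ} {f g : ℝ → ℝ} (hf : Lor n f) (hg : Lor m g) :
    Lor (n + m) (fun x => f x * g x) := by
  obtain ⟨A, hA, hfa⟩ := hf
  obtain ⟨B, hB, hgb⟩ := hg
  refine ⟨fun k => ∑ i ∈ range (n + 1), if k ≤ m + i ∧ i ≤ k then A i * B (k - i) else 0,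
    ?_, ?_⟩
  · intro k _
    apply Finset.sum_nonneg
    intro i hi
    rw [Finset.mem_range] at hi
    split
    · rename_i hc
      exact mul_nonneg (hA i (by omega)) (hB (k - i) (by omega))
    · exact le_rfl
  · intro x
    dsimp only
    rw [hfa x, hgb x, Finset.sum_mul_sum]
    simp only [Finset.sum_mul, ite_mul, zero_mul]
    conv_rhs => rw [Finset.sum_comm]
    apply Finset.sum_congr rfl
    intro i hi
    rw [Finset.mem_range] at hi
    rw [← Finset.sum_filter]
    have hfil : (range (n + m + 1)).filter (fun k => k ≤ m + i ∧ i ≤ k) = Finset.Ico i (i + m + 1) := by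
      ext k
      simp only [Finset.mem_filter, Finset.mem_range, Finset.mem_Ico]
      omega
    rw [hfil, Finset.sum_Ico_eq_sum_range]
    have hlen : i + m + 1 - i = m + 1 := by omega
    rw [hlen]
    apply Finset.sum_congr rfl
    intro j hj
    rw [Finset.mem_range] at hj
    have h1 : i + j - i = j := by omega
    have h2 : n + m - (i + j) = (n - i) + (m - j) := by omega
    rw [h1, h2, pow_add, pow_add]
    ring

private lemma Lor_const {c : ℝ} (hc : 0 ≤ c) (n : ℕ) : Lor n (fun _ => c) := by
  refine ⟨fun j => c * (n.choose j) / 2 ^ n, ?_, ?_⟩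
  · intro j _
    positivity
  · intro x
    have h := add_pow (1 - x) (x + 1) n
    have h2 : (1 - x) + (x + 1) = 2 := by ring
    rw [h2] at h
    have : ∑ j ∈ range (n + 1), c * (n.choose j) / 2 ^ n * (1 - x) ^ j * (x + 1) ^ (n - j)
        = c / 2 ^ n * ∑ j ∈ range (n + 1), (1 - x) ^ j * (x + 1) ^ (n - j) * (n.choose j : ℝ) := by
      rw [Finset.mul_sum]
      apply Finset.sum_congr rfl
      intro j _
      ring
    rw [this, ← h]
    have h3 : (2 : ℝ) ^ n ≠ 0 := by positivity
    field_simp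

private lemma Lor_mono {k n : ℕ} (hkn : k ≤ n) {f : ℝ → ℝ} (hf : Lor k f) : Lor n f := by
  have h1 : Lor (n - k) (fun _ => (1 : ℝ)) := Lor_const zero_le_one _
  have h2 := Lor_mul hf h1
  have h3 : k + (n - k) = n := by omega
  rw [h3] at h2
  exact Lor_ext (fun x => by simp) h2

private def LorPM (n : ℕ) (f : ℝ → ℝ) : Prop := Lor n f ∨ Lor n (fun x => -(f x))

private lemma LorPM_ext {n : ℕ} {f g : ℝ → ℝ} (h : ∀ x, f x = g x) (hf : LorPM n f) :
    LorPM n g := by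
  rcases hf with hf | hf
  · exact Or.inl (Lor_ext h hf)
  · exact Or.inr (Lor_ext (fun x => by rw [h x]) hf)

private lemma LorPM_mul {n m : ℕ} {f g : ℝ → ℝ} (hf : LorPM n f) (hg : LorPM m g) :
    LorPM (n + m) (fun x => f x * g x) := by
  rcases hf with hf | hf <;> rcases hg with hg | hg
  · exact Or.inl (Lor_mul hf hg)
  · exact Or.inr (Lor_ext (fun x => by ring) (Lor_mul hf hg))
  · exact Or.inr (Lor_ext (fun x => by ring) (Lor_mul hf hg))
  · exact Or.inl (Lor_ext (fun x => by ring) (Lor_mul hf hg))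

private lemma LorPM_linear {r : ℝ} (hr : 1 ≤ |r|) : LorPM 1 (fun x => x - r) := by
  rcases le_abs'.mp hr with h | h
  · -- r ≤ -1
    left
    refine ⟨fun j => if j = 0 then (1 - r) / 2 else if j = 1 then (-r - 1) / 2 else 0, ?_, ?_⟩
    · intro j _
      dsimp only
      split
      · linarith
      · split
        · linarith
        · exact le_rfl
    · intro x
      simp [Finset.sum_range_succ]
      ring
  · -- 1 ≤ r
    right
    refine ⟨fun j => if j = 0 then (r - 1) / 2 else if j = 1 then (r + 1) / 2 else 0, ?_, ?_⟩
    · intro j _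
      dsimp only
      split
      · linarith
      · split
        · linarith
        · exact le_rfl
    · intro x
      simp [Finset.sum_range_succ]
      ring

private lemma Lor_quad {b c : ℝ} (hc : 1 ≤ c) (hbc : b ^ 2 ≤ c) :
    Lor 2 (fun x => x ^ 2 - 2 * b * x + c) := by
  refine ⟨fun j => if j = 0 then (1 + c - 2 * b) / 4 else if j = 1 then (c - 1) / 2
      else if j = 2 then (1 + c + 2 * b) / 4 else 0, ?_, ?_⟩
  · intro j _
    dsimp only
    split
    · nlinarith [sq_nonneg (1 - b)]
    · split
      · linarith
      · split
        · nlinarith [sq_nonneg (1 + b)]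
        · exact le_rfl
  · intro x
    simp [Finset.sum_range_succ]
    ring

private lemma key : ∀ N : ℕ, ∀ f : Polynomial ℝ, f.natDegree = N → f ≠ 0 →
    (∀ z : ℂ, Polynomial.aeval z f = 0 → 1 ≤ ‖z‖) →
    LorPM N (fun x => f.eval x) := by
  intro N
  induction N using Nat.strong_induction_on with
  | _ N ih =>
  intro f hN hne hroots
  rcases Nat.eq_zero_or_pos N with h0 | hpos
  · subst h0
    obtain ⟨a, rfl⟩ := Polynomial.natDegree_eq_zero.mp hN
    rcases le_or_gt 0 a with ha | ha
    · exact Or.inl (Lor_ext (fun x => by simp) (Lor_const ha 0))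
    · exact Or.inr (Lor_ext (fun x => by simp) (Lor_const (by linarith : (0:ℝ) ≤ -a) 0))
  · have hinj : Function.Injective (algebraMap ℝ ℂ) := (algebraMap ℝ ℂ).injective
    have hdegmap : (f.map (algebraMap ℝ ℂ)).natDegree = N := by
      rw [Polynomial.natDegree_map_eq_of_injective hinj, hN]
    obtain ⟨z, hz⟩ := Complex.exists_root (f := f.map (algebraMap ℝ ℂ))
      (Polynomial.natDegree_pos_iff_degree_pos.mp (by omega))
    have haez : Polynomial.aeval z f = 0 := by
      rwa [Polynomial.aeval_def, ← Polynomial.eval_map]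
    have habs : 1 ≤ ‖z‖ := hroots z haez
    by_cases him : z.im = 0
    · -- real root
      set r := z.re with hr
      have hz' : (r : ℂ) = z := by
        apply Complex.ext <;> simp [him, hr]
      have hre : f.eval r = 0 := by
        have h1 : (algebraMap ℝ ℂ) (f.eval r) = 0 := by
          rw [← Polynomial.aeval_algebraMap_apply_eq_algebraMap_eval]
          rw [show (algebraMap ℝ ℂ) r = (r : ℂ) from rfl, hz']
          exact haez
        exact hinj (by simpa using h1)
      obtain ⟨g, hfg⟩ := Polynomial.dvd_iff_isRoot.mpr hre
      have hgne : g ≠ 0 := by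
        intro h; rw [h, mul_zero] at hfg; exact hne hfg
      have hdg : 1 + g.natDegree = N := by
        rw [← hN, hfg, Polynomial.natDegree_mul (Polynomial.X_sub_C_ne_zero r) hgne,
          Polynomial.natDegree_X_sub_C]
      have hgroots : ∀ w : ℂ, Polynomial.aeval w g = 0 → 1 ≤ ‖w‖ := by
        intro w hw
        apply hroots
        rw [hfg, map_mul, hw, mul_zero]
      have hg' := ih g.natDegree (by omega) g rfl hgne hgroots
      have hlin : LorPM 1 (fun x => x - r) := by
        apply LorPM_linear
        rwa [← Real.norm_eq_abs, ← Complex.norm_real, hz']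
      have hcomb := LorPM_mul hlin hg'
      rw [hdg] at hcomb
      apply LorPM_ext (f := fun x => (x - r) * g.eval x) _ hcomb
      intro x
      rw [hfg]
      simp
    · -- complex root
      have hqd := Polynomial.quadratic_dvd_of_aeval_eq_zero_im_ne_zero f haez him
      set q : Polynomial ℝ := X ^ 2 - C (2 * z.re) * X + C (‖z‖ ^ 2) with hq
      have hqdeg : q.natDegree = 2 := by
        rw [hq]
        compute_degree!
      have hqne : q ≠ 0 := by
        intro h
        rw [h] at hqdeg
        simp at hqdeg
      obtain ⟨g, hfg⟩ := hqd
      have hgne : g ≠ 0 := by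
        intro h; rw [h, mul_zero] at hfg; exact hne hfg
      have hdg : 2 + g.natDegree = N := by
        rw [← hN, hfg, Polynomial.natDegree_mul hqne hgne, hqdeg]
      have hgroots : ∀ w : ℂ, Polynomial.aeval w g = 0 → 1 ≤ ‖w‖ := by
        intro w hw
        apply hroots
        rw [hfg, map_mul, hw, mul_zero]
      have hg' := ih g.natDegree (by omega) g rfl hgne hgroots
      have hc1 : 1 ≤ ‖z‖ ^ 2 := by
        have : 1 ≤ ‖z‖ := by exact habs
        nlinarith
      have hc2 : z.re ^ 2 ≤ ‖z‖ ^ 2 := by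
        rw [Complex.sq_norm, Complex.normSq_apply]
        nlinarith [sq_nonneg z.im]
      have hquad : LorPM 2 (fun x => q.eval x) := by
        apply LorPM_ext (f := fun x => x ^ 2 - 2 * z.re * x + ‖z‖ ^ 2)
        · intro x
          rw [hq]
          simp
        · exact Or.inl (Lor_quad hc1 hc2)
      have hcomb := LorPM_mul hquad hg'
      rw [hdg] at hcomb
      apply LorPM_ext (f := fun x => q.eval x * g.eval x) _ hcomb
      intro x
      rw [hfg]
      simp

theorem lorentz_rep_of_no_zeros_in_unit_disk (n : ℕ) (f : Polynomial ℝ)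
    (hdeg : f.natDegree ≤ n)
    (hroots : ∀ z : ℂ, Polynomial.aeval z f = 0 → 1 ≤ ‖z‖) :
    (∃ A : ℕ → ℝ, (∀ j ≤ n, 0 ≤ A j) ∧
      ∀ x : ℝ, f.eval x = ∑ j ∈ range (n + 1), A j * (1 - x) ^ j * (x + 1) ^ (n - j)) ∨
    (∃ A : ℕ → ℝ, (∀ j ≤ n, 0 ≤ A j) ∧
      ∀ x : ℝ, -f.eval x = ∑ j ∈ range (n + 1), A j * (1 - x) ^ j * (x + 1) ^ (n - j)) := by
  by_cases hf : f = 0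
  · left
    refine ⟨fun _ => 0, fun j _ => le_rfl, fun x => by simp [hf]⟩
  · rcases key f.natDegree f rfl hf hroots with h | h
    · obtain ⟨A, h1, h2⟩ := Lor_mono hdeg h
      exact Or.inl ⟨A, h1, h2⟩
    · obtain ⟨A, h1, h2⟩ := Lor_mono hdeg h
      exact Or.inr ⟨A, h1, h2⟩
end

section
/- Let a < b be real numbers, d a nonnegative integer, and q > 0. If f(x) = Σ_{j=0}^d a_j (b-x)^j (x-a)^{d-j} with all a_j ≥ 0, then max{f(a), f(b)}^q ≤ ((qd+1)/(b-a)) ∫_a^b f(x)^q dx. -/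
open Finset

private lemma aux_nik (a b : ℝ) (hab : a < b) (d : ℕ) (q : ℝ) (hq : 0 < q)
    (c : ℝ) (hc : 0 ≤ c) (g : ℝ → ℝ) (hg : Continuous g)
    (hge : ∀ x ∈ Set.Icc a b, c * (x - a) ^ d ≤ g x) :
    (c * (b - a) ^ d) ^ q ≤ ((q * d + 1) / (b - a)) * ∫ x in a..b, g x ^ q := by
  have hba : (0:ℝ) < b - a := by linarith
  have hdq : (0:ℝ) ≤ (d:ℝ) * q := by positivity
  have hdq1 : (0:ℝ) < (d:ℝ) * q + 1 := by linarith
  -- lower bound on the integral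
  have hcont1 : Continuous fun x => (c * (x - a) ^ d) ^ q := by
    apply Continuous.rpow_const (by continuity)
    exact fun x => Or.inr hq.le
  have hcont2 : Continuous fun x => g x ^ q :=
    hg.rpow_const fun x => Or.inr hq.le
  have hmono : (∫ x in a..b, (c * (x - a) ^ d) ^ q) ≤ ∫ x in a..b, g x ^ q := by
    apply intervalIntegral.integral_mono_on hab.le
      (hcont1.intervalIntegrable a b) (hcont2.intervalIntegrable a b)
    intro x hx
    have hxa : (0:ℝ) ≤ x - a := by linarith [hx.1]
    exact Real.rpow_le_rpow (by positivity) (hge x hx) hq.le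
  -- compute the model integral
  have heq : (∫ x in a..b, (c * (x - a) ^ d) ^ q)
      = c ^ q * ((b - a) ^ ((d:ℝ) * q + 1) / ((d:ℝ) * q + 1)) := by
    have h1 : (∫ x in a..b, (c * (x - a) ^ d) ^ q)
        = ∫ x in a..b, c ^ q * (x - a) ^ ((d:ℝ) * q) := by
      apply intervalIntegral.integral_congr
      intro x hx
      rw [Set.uIcc_of_le hab.le] at hx
      have hxa : (0:ℝ) ≤ x - a := by linarith [hx.1]
      simp only
      rw [Real.mul_rpow hc (by positivity), ← Real.rpow_natCast (x - a) d,
        ← Real.rpow_mul hxa]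
    rw [h1, intervalIntegral.integral_const_mul]
    congr 1
    have h2 : (∫ x in a..b, (x - a) ^ ((d:ℝ) * q))
        = ∫ x in (0:ℝ)..(b - a), x ^ ((d:ℝ) * q) := by
      rw [intervalIntegral.integral_comp_sub_right (fun u => u ^ ((d:ℝ)*q)) a]
      norm_num
    rw [h2, integral_rpow (Or.inl (by linarith)), Real.zero_rpow (by linarith)]
    ring
  -- combine
  have key : c ^ q * ((b - a) ^ ((d:ℝ) * q + 1) / ((d:ℝ) * q + 1))
      ≤ ∫ x in a..b, g x ^ q := le_trans (le_of_eq heq.symm) hmono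
  have hlhs : (c * (b - a) ^ d) ^ q = c ^ q * (b - a) ^ ((d:ℝ) * q) := by
    rw [Real.mul_rpow hc (by positivity), ← Real.rpow_natCast (b - a) d,
      ← Real.rpow_mul hba.le]
  rw [hlhs]
  have hpow : (b - a) ^ ((d:ℝ) * q + 1) = (b - a) ^ ((d:ℝ) * q) * (b - a) := by
    rw [Real.rpow_add hba, Real.rpow_one]
  calc c ^ q * (b - a) ^ ((d:ℝ) * q)
      = ((q * d + 1) / (b - a)) * (c ^ q * ((b - a) ^ ((d:ℝ) * q + 1) / ((d:ℝ) * q + 1))) := by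
        rw [hpow]; field_simp
    _ ≤ ((q * d + 1) / (b - a)) * ∫ x in a..b, g x ^ q := by
        apply mul_le_mul_of_nonneg_left key
        positivity

theorem endpoint_nikolskii (a b : ℝ) (hab : a < b) (d : ℕ) (q : ℝ) (hq : 0 < q)
    (f : ℝ → ℝ) (A : ℕ → ℝ) (hA : ∀ j ≤ d, 0 ≤ A j)
    (hf : ∀ x : ℝ, f x = ∑ j ∈ range (d + 1), A j * (b - x) ^ j * (x - a) ^ (d - j)) :
    (max (f a) (f b)) ^ q ≤ ((q * d + 1) / (b - a)) * ∫ x in a..b, f x ^ q := by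
  have hba : (0:ℝ) < b - a := by linarith
  have hfc : Continuous f := by
    have : f = fun x => ∑ j ∈ range (d + 1), A j * (b - x) ^ j * (x - a) ^ (d - j) :=
      funext hf
    rw [this]; continuity
  -- f b case: use j = 0 term
  have hfb : f b = A 0 * (b - a) ^ d := by
    rw [hf b, Finset.sum_eq_single 0]
    · simp
    · intro j hj hj0
      rcases Nat.exists_eq_succ_of_ne_zero hj0 with ⟨k, rfl⟩
      simp [pow_succ]
    · simp
  have hfa : f a = A d * (b - a) ^ d := by
    rw [hf a, Finset.sum_eq_single d]
    · simp
    · intro j hj hjd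
      have : j < d := lt_of_le_of_ne (Nat.lt_succ_iff.mp (mem_range.mp hj)) hjd
      have : d - j ≠ 0 := Nat.sub_ne_zero_of_lt this
      rcases Nat.exists_eq_succ_of_ne_zero this with ⟨k, hk⟩
      simp [hk, pow_succ]
    · simp
  have hterm : ∀ x ∈ Set.Icc a b, ∀ j ∈ range (d+1),
      0 ≤ A j * (b - x) ^ j * (x - a) ^ (d - j) := by
    intro x hx j hj
    have := hA j (Nat.lt_succ_iff.mp (mem_range.mp hj))
    have h1 : (0:ℝ) ≤ b - x := by linarith [hx.2]
    have h2 : (0:ℝ) ≤ x - a := by linarith [hx.1]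
    positivity
  have hbcase : (f b) ^ q ≤ ((q * d + 1) / (b - a)) * ∫ x in a..b, f x ^ q := by
    rw [hfb]
    apply aux_nik a b hab d q hq (A 0) (hA 0 (Nat.zero_le d)) f hfc
    intro x hx
    rw [hf x]
    have h0 : A 0 * (x - a) ^ d = A 0 * (b - x) ^ 0 * (x - a) ^ (d - 0) := by simp
    rw [h0]
    exact Finset.single_le_sum (hterm x hx) (by simp)
  have hacase : (f a) ^ q ≤ ((q * d + 1) / (b - a)) * ∫ x in a..b, f x ^ q := by
    -- reflect: g x = f (a + b - x)
    set g : ℝ → ℝ := fun x => f (a + b - x) with hg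
    have hgc : Continuous g := hfc.comp (by continuity)
    have hint : (∫ x in a..b, g x ^ q) = ∫ x in a..b, f x ^ q := by
      have := intervalIntegral.integral_comp_sub_left (fun x => f x ^ q) (a + b) (a := a) (b := b)
      simpa using this
    have hgb : f a = A d * (b - a) ^ d := hfa
    rw [← hint, hgb]
    apply aux_nik a b hab d q hq (A d) (hA d le_rfl) g hgc
    intro x hx
    have hx' : a + b - x ∈ Set.Icc a b := by
      constructor <;> [linarith [hx.2]; linarith [hx.1]]
    have : A d * (x - a) ^ d = A d * (b - (a + b - x)) ^ d * ((a + b - x) - a) ^ (d - d) := by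
      ring_nf
      simp
    rw [hg]
    simp only
    rw [hf (a + b - x)]
    rw [this]
    exact Finset.single_le_sum (hterm (a+b-x) hx') (by simp)
  rcases max_cases (f a) (f b) with ⟨h1, _⟩ | ⟨h1, _⟩
  · rw [h1]; exact hacase
  · rw [h1]; exact hbcase
end

section
/- Let d be a nonnegative integer and q > 0. If f(x) = Σ_{j=0}^d a_j (1-x)^j (x+1)^{d-j} with all a_j ≥ 0, then (max_{x ∈ [-1,1]} f(x))^q ≤ ((qd+1)/2) ∫_{-1}^1 f(x)^q dx. -/
open Finset

lemma lorentz_compare (d : ℕ) (A : ℕ → ℝ) (hA : ∀ j ≤ d, 0 ≤ A j)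
    (x₀ x : ℝ) (h0 : -1 ≤ x₀) (h1 : x₀ ≤ x) (h2 : x ≤ 1) :
    (1 - x) ^ d * (∑ j ∈ range (d+1), A j * (1 - x₀) ^ j * (x₀ + 1) ^ (d - j))
    ≤ (1 - x₀) ^ d * (∑ j ∈ range (d+1), A j * (1 - x) ^ j * (x + 1) ^ (d - j)) := by
  rw [Finset.mul_sum, Finset.mul_sum]
  apply Finset.sum_le_sum
  intro j hj
  rw [Finset.mem_range] at hj
  have hj' : j ≤ d := Nat.lt_succ_iff.mp hj
  have hx1 : (0:ℝ) ≤ 1 - x := by linarith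
  have hx0 : (0:ℝ) ≤ 1 - x₀ := by linarith
  have hp1 : (0:ℝ) ≤ x₀ + 1 := by linarith
  have hp2 : (0:ℝ) ≤ x + 1 := by linarith
  have hAj := hA j hj'
  have ea : (1 - x)^d = (1-x)^j * (1-x)^(d-j) := by
    rw [← pow_add, Nat.add_sub_cancel' hj']
  have eb : (1 - x₀)^d = (1-x₀)^j * (1-x₀)^(d-j) := by
    rw [← pow_add, Nat.add_sub_cancel' hj']
  have key : ((1-x)*(x₀+1))^(d-j) ≤ ((1-x₀)*(x+1))^(d-j) := by
    apply pow_le_pow_left₀ (by positivity)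
    nlinarith
  calc (1 - x) ^ d * (A j * (1 - x₀) ^ j * (x₀ + 1) ^ (d - j))
      = (A j * ((1-x)^j * (1-x₀)^j)) * ((1-x)*(x₀+1))^(d-j) := by
        rw [ea, mul_pow]; ring
    _ ≤ (A j * ((1-x)^j * (1-x₀)^j)) * ((1-x₀)*(x+1))^(d-j) := by
        apply mul_le_mul_of_nonneg_left key (by positivity)
    _ = (1 - x₀) ^ d * (A j * (1 - x) ^ j * (x + 1) ^ (d - j)) := by
        rw [eb, mul_pow]; ring

lemma one_side (d : ℕ) (q : ℝ) (hq : 0 < q)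
    (f : ℝ → ℝ) (A : ℕ → ℝ) (hA : ∀ j ≤ d, 0 ≤ A j)
    (hf : ∀ x : ℝ, f x = ∑ j ∈ range (d + 1), A j * (1 - x) ^ j * (x + 1) ^ (d - j))
    (x₀ : ℝ) (h0 : -1 ≤ x₀) (h1 : x₀ ≤ 1) :
    f x₀ ^ q * (1 - x₀) ≤ (q * d + 1) * ∫ x in x₀..1, f x ^ q := by
  have cont : Continuous f := by
    have : f = fun x => ∑ j ∈ range (d + 1), A j * (1 - x) ^ j * (x + 1) ^ (d - j) :=
      funext hf
    rw [this]; fun_prop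
  have fnn : ∀ x : ℝ, -1 ≤ x → x ≤ 1 → 0 ≤ f x := by
    intro x hx1 hx2
    rw [hf]
    apply Finset.sum_nonneg
    intro j hj
    rw [Finset.mem_range] at hj
    have := hA j (Nat.lt_succ_iff.mp hj)
    have : (0:ℝ) ≤ 1 - x := by linarith
    have : (0:ℝ) ≤ x + 1 := by linarith
    positivity
  have hqd : (0:ℝ) ≤ q * d := by positivity
  have contq : Continuous (fun x => f x ^ q) :=
    cont.rpow_const (fun x => Or.inr hq.le)
  have contp : Continuous (fun x : ℝ => (1 - x) ^ (q * d)) :=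
    (continuous_const.sub continuous_id).rpow_const (fun x => Or.inr hqd)
  -- pointwise comparison on Icc x₀ 1
  have ptwise : ∀ x ∈ Set.Icc x₀ 1,
      (1 - x) ^ (q * (d:ℝ)) * f x₀ ^ q ≤ (1 - x₀) ^ (q * (d:ℝ)) * f x ^ q := by
    intro x hx
    obtain ⟨hxa, hxb⟩ := hx
    have hx1 : (0:ℝ) ≤ 1 - x := by linarith
    have hx0 : (0:ℝ) ≤ 1 - x₀ := by linarith
    have hcmp : (1 - x) ^ d * f x₀ ≤ (1 - x₀) ^ d * f x := by
      rw [hf x₀, hf x]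
      exact lorentz_compare d A hA x₀ x h0 hxa hxb
    have hL : (0:ℝ) ≤ (1 - x) ^ d * f x₀ :=
      mul_nonneg (pow_nonneg hx1 d) (fnn x₀ h0 h1)
    have := Real.rpow_le_rpow hL hcmp hq.le
    rw [Real.mul_rpow (pow_nonneg hx1 d) (fnn x₀ h0 h1),
        Real.mul_rpow (pow_nonneg hx0 d) (fnn x (by linarith) hxb)] at this
    have e1 : ∀ y : ℝ, 0 ≤ y → ((y^d : ℝ))^q = y ^ (q * (d:ℝ)) := by
      intro y hy
      rw [← Real.rpow_natCast y d, ← Real.rpow_mul hy, mul_comm]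
    rwa [e1 _ hx1, e1 _ hx0] at this
  -- integrate
  have int1 : IntervalIntegrable (fun x => (1 - x) ^ (q * (d:ℝ)) * f x₀ ^ q) MeasureTheory.volume x₀ 1 :=
    (contp.mul continuous_const).intervalIntegrable _ _
  have int2 : IntervalIntegrable (fun x => (1 - x₀) ^ (q * (d:ℝ)) * f x ^ q) MeasureTheory.volume x₀ 1 :=
    (continuous_const.mul contq).intervalIntegrable _ _
  have imono := intervalIntegral.integral_mono_on h1 int1 int2 ptwise
  -- compute the left integral
  have hcalc : (∫ x in x₀..1, (1 - x) ^ (q * (d:ℝ)) * f x₀ ^ q)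
      = ((1 - x₀) ^ (q * (d:ℝ) + 1) / (q * (d:ℝ) + 1)) * f x₀ ^ q := by
    rw [intervalIntegral.integral_mul_const]
    congr 1
    have := intervalIntegral.integral_comp_sub_left (fun y : ℝ => y ^ (q * (d:ℝ))) 1 (a := x₀) (b := 1)
    rw [this]
    norm_num
    rw [integral_rpow (Or.inl (by linarith))]
    rw [Real.zero_rpow (by positivity)]
    ring
  rw [hcalc, intervalIntegral.integral_const_mul] at imono
  -- conclude
  rcases eq_or_lt_of_le h1 with heq | hlt
  · subst heq
    simp
  · have hx0pos : (0:ℝ) < 1 - x₀ := by linarith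
    have hPpos : (0:ℝ) < (1 - x₀) ^ (q * (d:ℝ)) := Real.rpow_pos_of_pos hx0pos _
    rw [← mul_le_mul_iff_right₀ hPpos]
    calc (1 - x₀) ^ (q * (d:ℝ)) * (f x₀ ^ q * (1 - x₀))
        = ((1 - x₀) ^ (q * (d:ℝ)) * (1 - x₀)) * f x₀ ^ q := by ring
      _ = (1 - x₀) ^ (q * (d:ℝ) + 1) * f x₀ ^ q := by
          rw [Real.rpow_add_one (ne_of_gt hx0pos)]
      _ = (q * (d:ℝ) + 1) * (((1 - x₀) ^ (q * (d:ℝ) + 1) / (q * (d:ℝ) + 1)) * f x₀ ^ q) := by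
          field_simp
      _ ≤ (q * (d:ℝ) + 1) * ((1 - x₀) ^ (q * (d:ℝ)) * ∫ x in x₀..1, f x ^ q) := by
          apply mul_le_mul_of_nonneg_left imono (by positivity)
      _ = (1 - x₀) ^ (q * (d:ℝ)) * ((q * (d:ℝ) + 1) * ∫ x in x₀..1, f x ^ q) := by ring

lemma other_side (d : ℕ) (q : ℝ) (hq : 0 < q)
    (f : ℝ → ℝ) (A : ℕ → ℝ) (hA : ∀ j ≤ d, 0 ≤ A j)
    (hf : ∀ x : ℝ, f x = ∑ j ∈ range (d + 1), A j * (1 - x) ^ j * (x + 1) ^ (d - j))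
    (x₀ : ℝ) (h0 : -1 ≤ x₀) (h1 : x₀ ≤ 1) :
    f x₀ ^ q * (x₀ + 1) ≤ (q * d + 1) * ∫ x in (-1 : ℝ)..x₀, f x ^ q := by
  set g : ℝ → ℝ := fun x => f (-x) with hgdef
  have hB : ∀ j ≤ d, 0 ≤ A (d - j) := fun j _ => hA (d - j) (Nat.sub_le d j)
  have hg : ∀ x : ℝ, g x = ∑ j ∈ range (d + 1), A (d - j) * (1 - x) ^ j * (x + 1) ^ (d - j) := by
    intro x
    have refl := Finset.sum_range_reflect
      (fun j => A (d - j) * (1 - x) ^ j * (x + 1) ^ (d - j)) (d + 1)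
    simp only [hgdef]
    rw [hf (-x), ← refl]
    apply Finset.sum_congr rfl
    intro j hj
    rw [Finset.mem_range] at hj
    have hj' : j ≤ d := Nat.lt_succ_iff.mp hj
    have e1 : d + 1 - 1 - j = d - j := by omega
    have e2 : d - (d - j) = j := by omega
    rw [e1, e2]
    ring_nf
  have key := one_side d q hq g (fun j => A (d - j)) hB hg (-x₀) (by linarith) (by linarith)
  have e3 : g (-x₀) = f x₀ := by simp [hgdef]
  have e4 : (∫ x in (-x₀)..1, g x ^ q) = ∫ x in (-1 : ℝ)..x₀, f x ^ q := by
    have := intervalIntegral.integral_comp_neg (fun x => f x ^ q) (a := -x₀) (b := 1)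
    simpa [hgdef] using this
  rw [e3, e4] at key
  linarith [key]

theorem sup_pow_le_integral (d : ℕ) (q : ℝ) (hq : 0 < q)
    (f : ℝ → ℝ) (A : ℕ → ℝ) (hA : ∀ j ≤ d, 0 ≤ A j)
    (hf : ∀ x : ℝ, f x = ∑ j ∈ range (d + 1), A j * (1 - x) ^ j * (x + 1) ^ (d - j)) :
    (⨆ x : Set.Icc (-1 : ℝ) 1, f x) ^ q ≤ ((q * d + 1) / 2) * ∫ x in (-1 : ℝ)..1, f x ^ q := by
  have cont : Continuous f := by
    have : f = fun x => ∑ j ∈ range (d + 1), A j * (1 - x) ^ j * (x + 1) ^ (d - j) :=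
      funext hf
    rw [this]; fun_prop
  have contq : Continuous (fun x => f x ^ q) :=
    cont.rpow_const (fun x => Or.inr hq.le)
  obtain ⟨x₀, hx₀mem, hmax⟩ := (isCompact_Icc (a := (-1:ℝ)) (b := 1)).exists_isMaxOn
    (Set.nonempty_Icc.mpr (by norm_num)) cont.continuousOn
  obtain ⟨h0, h1⟩ := hx₀mem
  haveI : Nonempty (Set.Icc (-1:ℝ) 1) := ⟨⟨0, by norm_num⟩⟩
  have hM : (⨆ x : Set.Icc (-1 : ℝ) 1, f x) = f x₀ := by
    apply le_antisymm
    · exact ciSup_le fun x => hmax x.2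
    · exact le_ciSup ⟨f x₀, by rintro _ ⟨x, rfl⟩; exact hmax x.2⟩ (⟨x₀, ⟨h0, h1⟩⟩ : Set.Icc (-1:ℝ) 1)
  rw [hM]
  have key1 := one_side d q hq f A hA hf x₀ h0 h1
  have key2 := other_side d q hq f A hA hf x₀ h0 h1
  have hsplit : (∫ x in (-1:ℝ)..x₀, f x ^ q) + (∫ x in x₀..1, f x ^ q)
      = ∫ x in (-1:ℝ)..1, f x ^ q :=
    intervalIntegral.integral_add_adjacent_intervals
      (contq.intervalIntegrable _ _) (contq.intervalIntegrable _ _)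
  have h2 : 2 * f x₀ ^ q ≤ (q * ↑d + 1) * ∫ x in (-1:ℝ)..1, f x ^ q := by
    calc 2 * f x₀ ^ q = f x₀ ^ q * (1 - x₀) + f x₀ ^ q * (x₀ + 1) := by ring
      _ ≤ (q * ↑d + 1) * (∫ x in x₀..1, f x ^ q) + (q * ↑d + 1) * ∫ x in (-1:ℝ)..x₀, f x ^ q :=
          add_le_add key1 key2
      _ = (q * ↑d + 1) * ((∫ x in (-1:ℝ)..x₀, f x ^ q) + ∫ x in x₀..1, f x ^ q) := by ring
      _ = (q * ↑d + 1) * ∫ x in (-1:ℝ)..1, f x ^ q := by rw [hsplit]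
  linarith
end

section
/- Let d be a nonnegative integer and 0 < q < p < ∞. If f(x) = Σ_{j=0}^d a_j (1-x)^j (x+1)^{d-j} with all a_j ≥ 0, then (∫_{-1}^1 f(x)^p dx)^{1/p} ≤ ((qd+1)/2)^{1/q - 1/p} (∫_{-1}^1 f(x)^q dx)^{1/q}. -/
open Finset

private lemma aux_pow (j k : ℕ) (A B C D : ℝ) (hA : 0 ≤ A) (hB : 0 ≤ B)
    (hC : 0 ≤ C) (hD : 0 ≤ D) (h : B * C ≤ A * D) :
    B ^ (j + k) * A ^ j * C ^ k ≤ A ^ (j + k) * B ^ j * D ^ k := by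
  calc B ^ (j + k) * A ^ j * C ^ k = (A ^ j * B ^ j) * (B * C) ^ k := by ring
    _ ≤ (A ^ j * B ^ j) * (A * D) ^ k := by
        have h1 : (B * C) ^ k ≤ (A * D) ^ k := pow_le_pow_left₀ (by positivity) h k
        have h2 : (0:ℝ) ≤ A ^ j * B ^ j := by positivity
        exact mul_le_mul_of_nonneg_left h1 h2
    _ = A ^ (j + k) * B ^ j * D ^ k := by ring

private lemma key_right (d : ℕ) (A : ℕ → ℝ) (hA : ∀ j ≤ d, 0 ≤ A j)
    (f : ℝ → ℝ)
    (hf : ∀ x : ℝ, f x = ∑ j ∈ range (d + 1), A j * (1 - x) ^ j * (x + 1) ^ (d - j))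
    {x y : ℝ} (hy : -1 ≤ y) (hx : x ≤ 1) (hyx : y ≤ x) :
    (1 - x) ^ d * f y ≤ (1 - y) ^ d * f x := by
  rw [hf x, hf y, Finset.mul_sum, Finset.mul_sum]
  apply Finset.sum_le_sum
  intro j hj
  have hjd : j ≤ d := Nat.lt_succ_iff.mp (Finset.mem_range.mp hj)
  obtain ⟨k, rfl⟩ := Nat.exists_eq_add_of_le hjd
  have hAj : 0 ≤ A j := hA j hjd
  simp only [Nat.add_sub_cancel_left]
  have key : (1 - x) * (y + 1) ≤ (1 - y) * (x + 1) := by nlinarith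
  have := aux_pow j k (1 - y) (1 - x) (y + 1) (x + 1) (by linarith) (by linarith)
    (by linarith) (by linarith) key
  calc (1 - x) ^ (j + k) * (A j * (1 - y) ^ j * (y + 1) ^ k)
      = A j * ((1 - x) ^ (j + k) * (1 - y) ^ j * (y + 1) ^ k) := by ring
    _ ≤ A j * ((1 - y) ^ (j + k) * (1 - x) ^ j * (x + 1) ^ k) :=
        mul_le_mul_of_nonneg_left this hAj
    _ = (1 - y) ^ (j + k) * (A j * (1 - x) ^ j * (x + 1) ^ k) := by ring

private lemma key_left (d : ℕ) (A : ℕ → ℝ) (hA : ∀ j ≤ d, 0 ≤ A j)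
    (f : ℝ → ℝ)
    (hf : ∀ x : ℝ, f x = ∑ j ∈ range (d + 1), A j * (1 - x) ^ j * (x + 1) ^ (d - j))
    {x y : ℝ} (hy : y ≤ 1) (hx : -1 ≤ x) (hyx : x ≤ y) :
    (x + 1) ^ d * f y ≤ (y + 1) ^ d * f x := by
  rw [hf x, hf y, Finset.mul_sum, Finset.mul_sum]
  apply Finset.sum_le_sum
  intro j hj
  have hjd : j ≤ d := Nat.lt_succ_iff.mp (Finset.mem_range.mp hj)
  obtain ⟨k, rfl⟩ := Nat.exists_eq_add_of_le hjd
  have hAj : 0 ≤ A j := hA j hjd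
  simp only [Nat.add_sub_cancel_left]
  have key : (x + 1) * (1 - y) ≤ (y + 1) * (1 - x) := by nlinarith
  have := aux_pow k j (y + 1) (x + 1) (1 - y) (1 - x) (by linarith) (by linarith)
    (by linarith) (by linarith) key
  calc (x + 1) ^ (j + k) * (A j * (1 - y) ^ j * (y + 1) ^ k)
      = A j * ((x + 1) ^ (k + j) * (y + 1) ^ k * (1 - y) ^ j) := by ring
    _ ≤ A j * ((y + 1) ^ (k + j) * (x + 1) ^ k * (1 - x) ^ j) :=
        mul_le_mul_of_nonneg_left this hAj
    _ = (y + 1) ^ (j + k) * (A j * (1 - x) ^ j * (x + 1) ^ k) := by ring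

private lemma pow_rpow_aux (a : ℝ) (ha : 0 ≤ a) (d : ℕ) (q : ℝ) :
    ((a ^ d : ℝ)) ^ q = a ^ (q * d) := by
  rw [← Real.rpow_natCast a d, ← Real.rpow_mul ha, mul_comm]

private lemma piece_right (q s y : ℝ) (hs : 0 ≤ s) (hy1 : y ≤ 1)
    (f : ℝ → ℝ) (hcf : Continuous f) (hfq : 0 < q)
    (hkey : ∀ x ∈ Set.Icc y 1, (1 - x) ^ s * f y ^ q ≤ (1 - y) ^ s * f x ^ q) :
    f y ^ q * ((1 - y) / (s + 1)) ≤ ∫ x in y..1, f x ^ q := by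
  have hs1 : (0:ℝ) < s + 1 := by linarith
  rcases eq_or_lt_of_le hy1 with rfl | hylt
  · simp
  have hpos : (0:ℝ) < 1 - y := by linarith
  have hcq : Continuous fun x : ℝ => f x ^ q :=
    (Real.continuous_rpow_const hfq.le).comp hcf
  have hg1 : IntervalIntegrable (fun x : ℝ => (1 - x) ^ s * f y ^ q) MeasureTheory.volume y 1 :=
    (((Real.continuous_rpow_const hs).comp (by continuity)).mul continuous_const).intervalIntegrable _ _
  have hg2 : IntervalIntegrable (fun x : ℝ => (1 - y) ^ s * f x ^ q) MeasureTheory.volume y 1 :=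
    (continuous_const.mul hcq).intervalIntegrable _ _
  have hmono := intervalIntegral.integral_mono_on hy1 hg1 hg2 hkey
  have h3 : (∫ x in y..1, (1 - x) ^ s * f y ^ q) = (1 - y) ^ (s + 1) / (s + 1) * f y ^ q := by
    rw [intervalIntegral.integral_mul_const]
    congr 1
    have := intervalIntegral.integral_comp_sub_left (a := y) (b := 1) (fun t : ℝ => t ^ s) 1
    rw [this]
    norm_num
    rw [integral_rpow (Or.inl (by linarith))]
    rw [Real.zero_rpow (by positivity)]
    ring
  have h4 : (∫ x in y..1, (1 - y) ^ s * f x ^ q) = (1 - y) ^ s * ∫ x in y..1, f x ^ q := by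
    rw [intervalIntegral.integral_const_mul]
  rw [h3, h4] at hmono
  have hrw : (1 - y) ^ (s + 1) / (s + 1) * f y ^ q
      = (1 - y) ^ s * (f y ^ q * ((1 - y) / (s + 1))) := by
    rw [Real.rpow_add hpos, Real.rpow_one]; ring
  rw [hrw] at hmono
  exact (mul_le_mul_iff_right₀ (Real.rpow_pos_of_pos hpos s)).mp hmono

private lemma piece_left (q s y : ℝ) (hs : 0 ≤ s) (hy1 : -1 ≤ y)
    (f : ℝ → ℝ) (hcf : Continuous f) (hfq : 0 < q)
    (hkey : ∀ x ∈ Set.Icc (-1:ℝ) y, (x + 1) ^ s * f y ^ q ≤ (y + 1) ^ s * f x ^ q) :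
    f y ^ q * ((y + 1) / (s + 1)) ≤ ∫ x in (-1:ℝ)..y, f x ^ q := by
  have hs1 : (0:ℝ) < s + 1 := by linarith
  rcases eq_or_lt_of_le hy1 with rfl | hylt
  · simp
  have hpos : (0:ℝ) < y + 1 := by linarith
  have hcq : Continuous fun x : ℝ => f x ^ q :=
    (Real.continuous_rpow_const hfq.le).comp hcf
  have hg1 : IntervalIntegrable (fun x : ℝ => (x + 1) ^ s * f y ^ q) MeasureTheory.volume (-1) y :=
    (((Real.continuous_rpow_const hs).comp (by continuity)).mul continuous_const).intervalIntegrable _ _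
  have hg2 : IntervalIntegrable (fun x : ℝ => (y + 1) ^ s * f x ^ q) MeasureTheory.volume (-1) y :=
    (continuous_const.mul hcq).intervalIntegrable _ _
  have hmono := intervalIntegral.integral_mono_on hy1 hg1 hg2 hkey
  have h3 : (∫ x in (-1:ℝ)..y, (x + 1) ^ s * f y ^ q) = (y + 1) ^ (s + 1) / (s + 1) * f y ^ q := by
    rw [intervalIntegral.integral_mul_const]
    congr 1
    have := intervalIntegral.integral_comp_add_right (a := (-1:ℝ)) (b := y) (fun t : ℝ => t ^ s) 1
    rw [this]
    norm_num
    rw [integral_rpow (Or.inl (by linarith))]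
    rw [Real.zero_rpow (by positivity)]
    ring
  have h4 : (∫ x in (-1:ℝ)..y, (y + 1) ^ s * f x ^ q) = (y + 1) ^ s * ∫ x in (-1:ℝ)..y, f x ^ q := by
    rw [intervalIntegral.integral_const_mul]
  rw [h3, h4] at hmono
  have hrw : (y + 1) ^ (s + 1) / (s + 1) * f y ^ q
      = (y + 1) ^ s * (f y ^ q * ((y + 1) / (s + 1))) := by
    rw [Real.rpow_add hpos, Real.rpow_one]; ring
  rw [hrw] at hmono
  exact (mul_le_mul_iff_right₀ (Real.rpow_pos_of_pos hpos s)).mp hmono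

theorem nikolskii_lorentz (d : ℕ) (p q : ℝ) (hq : 0 < q) (hqp : q < p)
    (f : ℝ → ℝ) (A : ℕ → ℝ) (hA : ∀ j ≤ d, 0 ≤ A j)
    (hf : ∀ x : ℝ, f x = ∑ j ∈ range (d + 1), A j * (1 - x) ^ j * (x + 1) ^ (d - j)) :
    (∫ x in (-1 : ℝ)..1, f x ^ p) ^ (1 / p) ≤
      ((q * d + 1) / 2) ^ (1 / q - 1 / p) * (∫ x in (-1 : ℝ)..1, f x ^ q) ^ (1 / q) := by
  have hp : (0:ℝ) < p := hq.trans hqp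
  have hq0 : q ≠ 0 := hq.ne'
  have hp0 : p ≠ 0 := hp.ne'
  set s : ℝ := q * d with hs_def
  have hs : 0 ≤ s := by positivity
  have hs1 : (0:ℝ) < s + 1 := by linarith
  -- continuity and nonnegativity of f
  have hcf : Continuous f := by
    rw [funext hf]
    exact continuous_finset_sum _ fun j _ => by continuity
  have hnn : ∀ x ∈ Set.Icc (-1:ℝ) 1, 0 ≤ f x := by
    intro x hx
    rw [hf x]
    apply Finset.sum_nonneg
    intro j hj
    have hjd : j ≤ d := Nat.lt_succ_iff.mp (Finset.mem_range.mp hj)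
    have h1 : (0:ℝ) ≤ 1 - x := by linarith [hx.2]
    have h2 : (0:ℝ) ≤ x + 1 := by linarith [hx.1]
    have := hA j hjd
    positivity
  -- maximum point
  obtain ⟨y, hyIcc, hymax⟩ := isCompact_Icc.exists_isMaxOn (Set.nonempty_Icc.mpr (by norm_num))
    hcf.continuousOn (s := Set.Icc (-1:ℝ) 1)
  have hy1 : -1 ≤ y := hyIcc.1
  have hy2 : y ≤ 1 := hyIcc.2
  have hM0 : 0 ≤ f y := hnn y hyIcc
  have hcq : Continuous fun x : ℝ => f x ^ q := (Real.continuous_rpow_const hq.le).comp hcf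
  have hcp : Continuous fun x : ℝ => f x ^ p := (Real.continuous_rpow_const hp.le).comp hcf
  set Iq : ℝ := ∫ x in (-1:ℝ)..1, f x ^ q with hIq_def
  set Ip : ℝ := ∫ x in (-1:ℝ)..1, f x ^ p with hIp_def
  have hIq0 : 0 ≤ Iq :=
    intervalIntegral.integral_nonneg (by norm_num) fun x hx =>
      Real.rpow_nonneg (hnn x hx) q
  have hIp0 : 0 ≤ Ip :=
    intervalIntegral.integral_nonneg (by norm_num) fun x hx =>
      Real.rpow_nonneg (hnn x hx) p
  -- sup bound: f y ^ q * (2/(s+1)) ≤ Iq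
  have hkeyR : ∀ x ∈ Set.Icc y 1, (1 - x) ^ s * f y ^ q ≤ (1 - y) ^ s * f x ^ q := by
    intro x hx
    have hx1 : x ≤ 1 := hx.2
    have hyx : y ≤ x := hx.1
    have hxm : -1 ≤ x := le_trans hy1 hyx
    have h1x : (0:ℝ) ≤ 1 - x := by linarith
    have h1y : (0:ℝ) ≤ 1 - y := by linarith
    have hfx : 0 ≤ f x := hnn x ⟨hxm, hx1⟩
    have hkey := key_right d A hA f hf hy1 hx1 hyx
    have h0 : 0 ≤ (1 - x) ^ d * f y := by positivity
    have := Real.rpow_le_rpow h0 hkey hq.le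
    rwa [Real.mul_rpow (by positivity) hM0, Real.mul_rpow (by positivity) hfx,
      pow_rpow_aux _ h1x, pow_rpow_aux _ h1y] at this
  have hkeyL : ∀ x ∈ Set.Icc (-1:ℝ) y, (x + 1) ^ s * f y ^ q ≤ (y + 1) ^ s * f x ^ q := by
    intro x hx
    have hxm : -1 ≤ x := hx.1
    have hyx : x ≤ y := hx.2
    have hx1 : x ≤ 1 := le_trans hyx hy2
    have h1x : (0:ℝ) ≤ x + 1 := by linarith
    have h1y : (0:ℝ) ≤ y + 1 := by linarith
    have hfx : 0 ≤ f x := hnn x ⟨hxm, hx1⟩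
    have hkey := key_left d A hA f hf hy2 hxm hyx
    have h0 : 0 ≤ (x + 1) ^ d * f y := by positivity
    have := Real.rpow_le_rpow h0 hkey hq.le
    rwa [Real.mul_rpow (by positivity) hM0, Real.mul_rpow (by positivity) hfx,
      pow_rpow_aux _ h1x, pow_rpow_aux _ h1y] at this
  have hR := piece_right q s y hs hy2 f hcf hq hkeyR
  have hL := piece_left q s y hs hy1 f hcf hq hkeyL
  have hsplit : Iq = (∫ x in (-1:ℝ)..y, f x ^ q) + ∫ x in y..1, f x ^ q :=
    (intervalIntegral.integral_add_adjacent_intervals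
      (hcq.intervalIntegrable (μ := MeasureTheory.volume) (-1) y) (hcq.intervalIntegrable (μ := MeasureTheory.volume) y 1)).symm
  have hsup : f y ^ q * (2 / (s + 1)) ≤ Iq := by
    have : f y ^ q * ((y + 1) / (s + 1)) + f y ^ q * ((1 - y) / (s + 1))
        = f y ^ q * (2 / (s + 1)) := by ring
    rw [hsplit, ← this]
    exact add_le_add hL hR
  -- consequence: f y ^ q ≤ C * Iq
  set C : ℝ := (s + 1) / 2 with hC_def
  have hC : 0 < C := by positivity
  have hMC : f y ^ q ≤ C * Iq := by
    have h1 : C * (2 / (s + 1)) = 1 := by rw [hC_def]; field_simp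
    calc f y ^ q = f y ^ q * (C * (2 / (s + 1))) := by rw [h1, mul_one]
      _ = C * (f y ^ q * (2 / (s + 1))) := by ring
      _ ≤ C * Iq := mul_le_mul_of_nonneg_left hsup hC.le
  -- Ip ≤ M^(p-q) * Iq
  have hIpIq : Ip ≤ f y ^ (p - q) * Iq := by
    have hptw : ∀ x ∈ Set.Icc (-1:ℝ) 1, f x ^ p ≤ f y ^ (p - q) * f x ^ q := by
      intro x hx
      have hfx : 0 ≤ f x := hnn x hx
      have h1 : f x ^ p = f x ^ (p - q) * f x ^ q := by
        rw [← Real.rpow_add' hfx (by rw [sub_add_cancel]; exact hp0), sub_add_cancel]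
      rw [h1]
      have h2 : f x ^ (p - q) ≤ f y ^ (p - q) :=
        Real.rpow_le_rpow hfx (hymax hx) (by linarith)
      exact mul_le_mul_of_nonneg_right h2 (Real.rpow_nonneg hfx q)
    have := intervalIntegral.integral_mono_on (by norm_num : (-1:ℝ) ≤ 1)
      (hcp.intervalIntegrable (μ := MeasureTheory.volume) _ _) ((continuous_const.mul hcq).intervalIntegrable _ _) hptw
    simp only [Pi.mul_apply] at this
    rwa [intervalIntegral.integral_const_mul] at this
  -- combine
  set e : ℝ := (p - q) / q with he_def
  have he : 0 ≤ e := by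
    apply div_nonneg (by linarith) hq.le
  have hfinal : Ip ≤ C ^ e * Iq ^ (p / q) := by
    have step1 : f y ^ (p - q) = (f y ^ q) ^ e := by
      rw [← Real.rpow_mul hM0]
      rw [he_def]
      field_simp
    have step2 : (f y ^ q) ^ e ≤ (C * Iq) ^ e :=
      Real.rpow_le_rpow (Real.rpow_nonneg hM0 q) hMC he
    have step3 : (C * Iq) ^ e = C ^ e * Iq ^ e := Real.mul_rpow hC.le hIq0
    have step4 : Iq ^ e * Iq = Iq ^ (p / q) := by
      have : p / q = e + 1 := by rw [he_def]; field_simp; ring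
      rw [this, Real.rpow_add' hIq0 (by positivity), Real.rpow_one]
    calc Ip ≤ f y ^ (p - q) * Iq := hIpIq
      _ = (f y ^ q) ^ e * Iq := by rw [step1]
      _ ≤ (C * Iq) ^ e * Iq := mul_le_mul_of_nonneg_right step2 hIq0
      _ = C ^ e * (Iq ^ e * Iq) := by rw [step3]; ring
      _ = C ^ e * Iq ^ (p / q) := by rw [step4]
  have hgoal : Ip ^ (1 / p) ≤ C ^ (1 / q - 1 / p) * Iq ^ (1 / q) := by
    have h1 : Ip ^ (1 / p) ≤ (C ^ e * Iq ^ (p / q)) ^ (1 / p) :=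
      Real.rpow_le_rpow hIp0 hfinal (by positivity)
    have eq1 : e * (1 / p) = 1 / q - 1 / p := by rw [he_def]; field_simp
    have eq2 : p / q * (1 / p) = 1 / q := by field_simp
    have h2 : (C ^ e * Iq ^ (p / q)) ^ (1 / p)
        = C ^ (1 / q - 1 / p) * Iq ^ (1 / q) := by
      rw [Real.mul_rpow (Real.rpow_nonneg hC.le e) (Real.rpow_nonneg hIq0 _),
        ← Real.rpow_mul hC.le, ← Real.rpow_mul hIq0, eq1, eq2]
    exact h1.trans_eq h2
  exact hgoal
end

section
/- Let d be a nonnegative integer and q > 0. If f(x) = Σ_{j=0}^d a_j (1-x)^j (x+1)^{d-j} with all a_j ≥ 0, then sup_{x ∈ [-1,1]} f(x) ≤ ((qd+1)/2)^{1/q} (∫_{-1}^1 f(x)^q dx)^{1/q}. -/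
open Finset intervalIntegral MeasureTheory

lemma lor_nonneg (d : ℕ) (A : ℕ → ℝ) (hA : ∀ j ≤ d, 0 ≤ A j) {x : ℝ}
    (h1 : -1 ≤ x) (h2 : x ≤ 1) :
    0 ≤ ∑ j ∈ range (d + 1), A j * (1 - x) ^ j * (x + 1) ^ (d - j) := by
  apply Finset.sum_nonneg
  intro j hj
  have hjd : j ≤ d := Nat.lt_succ_iff.mp (mem_range.mp hj)
  exact mul_nonneg (mul_nonneg (hA j hjd) (pow_nonneg (by linarith) _))
    (pow_nonneg (by linarith) _)

lemma lor_key (d : ℕ) (A : ℕ → ℝ) (hA : ∀ j ≤ d, 0 ≤ A j) {x y : ℝ}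
    (hx : -1 ≤ x) (hy : y ≤ 1) (hxy : x ≤ y) :
    (∑ j ∈ range (d + 1), A j * (1 - y) ^ j * (y + 1) ^ (d - j)) * (x + 1) ^ d ≤
    (∑ j ∈ range (d + 1), A j * (1 - x) ^ j * (x + 1) ^ (d - j)) * (y + 1) ^ d := by
  rw [Finset.sum_mul, Finset.sum_mul]
  apply Finset.sum_le_sum
  intro j hj
  have hjd : j ≤ d := Nat.lt_succ_iff.mp (mem_range.mp hj)
  have h1 : (0:ℝ) ≤ 1 - y := by linarith
  have h2 : (0:ℝ) ≤ x + 1 := by linarith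
  have h3 : (0:ℝ) ≤ y + 1 := by linarith
  have pdx : (x + 1) ^ d = (x + 1) ^ j * (x + 1) ^ (d - j) := by
    rw [← pow_add, Nat.add_sub_cancel' hjd]
  have pdy : (y + 1) ^ d = (y + 1) ^ j * (y + 1) ^ (d - j) := by
    rw [← pow_add, Nat.add_sub_cancel' hjd]
  have key : ((1 - y) * (x + 1)) ^ j ≤ ((1 - x) * (y + 1)) ^ j := by
    apply pow_le_pow_left₀ (mul_nonneg h1 h2)
    nlinarith
  have e1 : A j * (1 - y) ^ j * (y + 1) ^ (d - j) * (x + 1) ^ d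
      = A j * (((1 - y) * (x + 1)) ^ j * ((y + 1) * (x + 1)) ^ (d - j)) := by
    rw [pdx, mul_pow, mul_pow]; ring
  have e2 : A j * (1 - x) ^ j * (x + 1) ^ (d - j) * (y + 1) ^ d
      = A j * (((1 - x) * (y + 1)) ^ j * ((y + 1) * (x + 1)) ^ (d - j)) := by
    rw [pdy, mul_pow, mul_pow]; ring
  rw [e1, e2]
  exact mul_le_mul_of_nonneg_left
    (mul_le_mul_of_nonneg_right key (pow_nonneg (mul_nonneg h3 h2) _)) (hA j hjd)

lemma aux_int (a b : ℝ) (hab : a ≤ b) (r : ℝ) (hr : 0 ≤ r) (G : ℝ → ℝ)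
    (hG : IntervalIntegrable G volume a b) (K : ℝ) (hK : 0 ≤ K)
    (h : ∀ x ∈ Set.Icc a b, K * (x - a) ^ r ≤ G x * (b - a) ^ r) :
    K * (b - a) / (r + 1) ≤ ∫ x in a..b, G x := by
  rcases eq_or_lt_of_le hab with rfl | hlt
  · simp
  have hba : 0 < b - a := by linarith
  have hr1 : (0:ℝ) < r + 1 := by linarith
  have hcont : Continuous (fun x : ℝ => (x - a) ^ r) :=
    (Real.continuous_rpow_const hr).comp (continuous_id.sub continuous_const)
  have h1 : ∫ x in a..b, K * (x - a) ^ r ≤ ∫ x in a..b, G x * (b - a) ^ r := by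
    apply integral_mono_on hab
    · exact (continuous_const.mul hcont).intervalIntegrable a b
    · exact hG.mul_const _
    · exact h
  have h2 : ∫ x in a..b, (x - a) ^ r = (b - a) ^ (r + 1) / (r + 1) := by
    have := intervalIntegral.integral_comp_sub_right (fun u : ℝ => u ^ r) a (a := a) (b := b)
    rw [this, sub_self, integral_rpow (Or.inl (by linarith)),
      Real.zero_rpow (by positivity)]
    ring
  have h3 : ∫ x in a..b, K * (x - a) ^ r = K * ((b - a) ^ (r + 1) / (r + 1)) := by
    rw [intervalIntegral.integral_const_mul, h2]
  have h4 : ∫ x in a..b, G x * (b - a) ^ r = (∫ x in a..b, G x) * (b - a) ^ r := by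
    rw [intervalIntegral.integral_mul_const]
  rw [h3, h4] at h1
  have hc : (0:ℝ) < (b - a) ^ r := Real.rpow_pos_of_pos hba r
  have e : K * ((b - a) ^ (r + 1) / (r + 1)) = (K * (b - a) / (r + 1)) * (b - a) ^ r := by
    rw [Real.rpow_add hba, Real.rpow_one]; ring
  rw [e] at h1
  exact le_of_mul_le_mul_right h1 hc

lemma left_bound (d : ℕ) (q : ℝ) (hq : 0 < q) (A : ℕ → ℝ) (hA : ∀ j ≤ d, 0 ≤ A j)
    (f : ℝ → ℝ)
    (hf : ∀ x : ℝ, f x = ∑ j ∈ range (d + 1), A j * (1 - x) ^ j * (x + 1) ^ (d - j))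
    (x0 : ℝ) (hx0 : x0 ∈ Set.Icc (-1:ℝ) 1) :
    f x0 ^ q * (x0 + 1) / (q * d + 1) ≤ ∫ x in (-1:ℝ)..x0, f x ^ q := by
  have hfc : Continuous f := by
    have : f = fun x => ∑ j ∈ range (d + 1), A j * (1 - x) ^ j * (x + 1) ^ (d - j) :=
      funext hf
    rw [this]
    exact continuous_finset_sum _ (fun j _ => by continuity)
  have hfq : Continuous (fun x => f x ^ q) := hfc.rpow_const (fun x => Or.inr hq.le)
  have hr : 0 ≤ q * d := by positivity
  have hfx0 : 0 ≤ f x0 := by rw [hf]; exact lor_nonneg d A hA hx0.1 hx0.2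
  have main := aux_int (-1) x0 hx0.1 (q * d) hr (fun x => f x ^ q)
    (hfq.intervalIntegrable _ _) (f x0 ^ q) (Real.rpow_nonneg hfx0 q) ?_
  · have e : x0 - (-1) = x0 + 1 := by ring
    rw [e] at main
    exact le_of_eq_of_le (by ring_nf) main
  intro x hx
  have hx1 : -1 ≤ x := hx.1
  have hx2 : x ≤ x0 := hx.2
  have hfx : 0 ≤ f x := by rw [hf]; exact lor_nonneg d A hA hx1 (le_trans hx2 hx0.2)
  have key : f x0 * (x + 1) ^ d ≤ f x * (x0 + 1) ^ d := by
    rw [hf x, hf x0]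
    exact lor_key d A hA hx1 hx0.2 hx2
  have hL : 0 ≤ f x0 * (x + 1) ^ d :=
    mul_nonneg hfx0 (pow_nonneg (by linarith) _)
  have h2 : (f x0 * (x + 1) ^ d) ^ q ≤ (f x * (x0 + 1) ^ d) ^ q :=
    Real.rpow_le_rpow hL key hq.le
  have hxp : (0:ℝ) ≤ x + 1 := by linarith
  have hx0p : (0:ℝ) ≤ x0 + 1 := by linarith [hx0.1]
  have ed : ∀ z : ℝ, 0 ≤ z → ((z : ℝ) ^ d) ^ q = z ^ (q * (d:ℝ)) := by
    intro z hz
    rw [← Real.rpow_natCast z d, ← Real.rpow_mul hz, mul_comm]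
  rw [Real.mul_rpow hfx0 (pow_nonneg hxp _), Real.mul_rpow hfx (pow_nonneg hx0p _),
    ed _ hxp, ed _ hx0p] at h2
  have e1 : x - (-1) = x + 1 := by ring
  have e2 : x0 - (-1) = x0 + 1 := by ring
  rw [e1, e2]
  exact h2

theorem nikolskii_lorentz_sup (d : ℕ) (q : ℝ) (hq : 0 < q)
    (f : ℝ → ℝ) (A : ℕ → ℝ) (hA : ∀ j ≤ d, 0 ≤ A j)
    (hf : ∀ x : ℝ, f x = ∑ j ∈ range (d + 1), A j * (1 - x) ^ j * (x + 1) ^ (d - j)) :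
    (⨆ x : Set.Icc (-1 : ℝ) 1, f x) ≤
      ((q * d + 1) / 2) ^ (1 / q) * (∫ x in (-1 : ℝ)..1, f x ^ q) ^ (1 / q) := by
  have hfc : Continuous f := by
    have : f = fun x => ∑ j ∈ range (d + 1), A j * (1 - x) ^ j * (x + 1) ^ (d - j) :=
      funext hf
    rw [this]
    exact continuous_finset_sum _ (fun j _ => by continuity)
  have hfq : Continuous (fun x => f x ^ q) := hfc.rpow_const (fun x => Or.inr hq.le)
  obtain ⟨x0, hx0, hmax⟩ := isCompact_Icc.exists_isMaxOn (Set.nonempty_Icc.mpr (by norm_num))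
    (hfc.continuousOn (s := Set.Icc (-1:ℝ) 1))
  set M := f x0 with hM
  have hM0 : 0 ≤ M := by rw [hM, hf]; exact lor_nonneg d A hA hx0.1 hx0.2
  -- reflected function
  set g : ℝ → ℝ := fun x => f (-x) with hg
  have hAg : ∀ j ≤ d, 0 ≤ A (d - j) := fun j _ => hA _ (Nat.sub_le d j)
  have hgform : ∀ x : ℝ, g x = ∑ j ∈ range (d + 1), A (d - j) * (1 - x) ^ j * (x + 1) ^ (d - j) := by
    intro x
    rw [hg]
    simp only []
    rw [hf (-x), ← Finset.sum_range_reflect]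
    apply Finset.sum_congr rfl
    intro j hj
    have hjd : j ≤ d := Nat.lt_succ_iff.mp (mem_range.mp hj)
    have e0 : d + 1 - 1 - j = d - j := by omega
    have e1 : d - (d - j) = j := by omega
    rw [e0, e1]
    ring_nf
  have left1 := left_bound d q hq A hA f hf x0 hx0
  have left2 := left_bound d q hq (fun j => A (d - j)) hAg g hgform (-x0)
    (by constructor <;> [linarith [hx0.2]; linarith [hx0.1]])
  have hgM : g (-x0) = M := by rw [hg]; simp [hM]
  rw [hgM] at left2
  have hint2 : ∫ x in (-1:ℝ)..(-x0), g x ^ q = ∫ x in x0..1, f x ^ q := by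
    have : (fun x => g x ^ q) = fun x => (fun y => f y ^ q) (-x) := by
      funext x; rw [hg]
    rw [this, intervalIntegral.integral_comp_neg (fun y => f y ^ q)]
    norm_num
  rw [hint2] at left2
  have hsplit : ∫ x in (-1:ℝ)..1, f x ^ q =
      (∫ x in (-1:ℝ)..x0, f x ^ q) + ∫ x in x0..1, f x ^ q :=
    (intervalIntegral.integral_add_adjacent_intervals
      (hfq.intervalIntegrable _ _) (hfq.intervalIntegrable _ _)).symm
  have hr1 : (0:ℝ) < q * d + 1 := by positivity
  have htot : 2 * M ^ q / (q * d + 1) ≤ ∫ x in (-1:ℝ)..1, f x ^ q := by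
    rw [hsplit]
    have : M ^ q * (x0 + 1) / (q * d + 1) + M ^ q * (-x0 + 1) / (q * d + 1)
        = 2 * M ^ q / (q * d + 1) := by field_simp; ring
    linarith
  have hInt0 : 0 ≤ ∫ x in (-1:ℝ)..1, f x ^ q := by
    refine le_trans ?_ htot
    positivity
  have hMq : M ^ q ≤ ((q * d + 1) / 2) * ∫ x in (-1:ℝ)..1, f x ^ q := by
    rw [div_le_iff₀ hr1] at htot
    linarith [htot]
  have hsup : (⨆ x : Set.Icc (-1:ℝ) 1, f x) ≤ M := by
    have : Nonempty (Set.Icc (-1:ℝ) 1) := ⟨⟨0, by norm_num⟩⟩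
    exact ciSup_le (fun x => hmax x.2)
  refine le_trans hsup ?_
  have hMrw : (M ^ q) ^ (1 / q) = M := by
    rw [← Real.rpow_mul hM0, mul_one_div_cancel hq.ne', Real.rpow_one]
  calc M = (M ^ q) ^ (1 / q) := hMrw.symm
    _ ≤ (((q * d + 1) / 2) * ∫ x in (-1:ℝ)..1, f x ^ q) ^ (1 / q) :=
        Real.rpow_le_rpow (Real.rpow_nonneg hM0 q) hMq (by positivity)
    _ = ((q * d + 1) / 2) ^ (1 / q) * (∫ x in (-1:ℝ)..1, f x ^ q) ^ (1 / q) :=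
        Real.mul_rpow (by positivity) hInt0
end

section
/- Let n be a positive integer and 0 < q < p < ∞. If f is a real polynomial of degree at most n with no zeros in the open unit disk of ℂ, then (∫_{-1}^1 |f(x)|^p dx)^{1/p} ≤ ((qn+1)/2)^{1/q - 1/p} (∫_{-1}^1 |f(x)|^q dx)^{1/q}. -/
open Polynomial

private lemma nik_sq_key (a b x y : ℝ) (ha : 1 ≤ a^2 + b^2) (hx : -1 ≤ x) (hxy : x ≤ y) (hy : y ≤ 1) :
    ((y-a)^2 + b^2) * (1+x)^2 ≤ ((x-a)^2 + b^2) * (1+y)^2 := by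
  rcases le_or_gt (1+a) 0 with hc | hc
  · nlinarith [mul_nonneg (sub_nonneg.2 hxy) (mul_nonneg (mul_nonneg (by linarith : (0:ℝ) ≤ 1+x) (by linarith : (0:ℝ) ≤ 1+y)) (by linarith : (0:ℝ) ≤ -(1+a))), mul_nonneg (sub_nonneg.2 hxy) (by nlinarith : (0:ℝ) ≤ ((1+a)^2+b^2)*((1+x)+(1+y)))]
  · nlinarith [mul_nonneg (sub_nonneg.2 hxy) (mul_nonneg (mul_nonneg hc.le hc.le) (by nlinarith : (0:ℝ) ≤ (1+x)+(1+y) - (1+x)*(1+y))),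
      mul_nonneg (sub_nonneg.2 hxy) (mul_nonneg (by positivity : (0:ℝ) ≤ b^2) (by linarith : (0:ℝ) ≤ (1+x)+(1+y))),
      mul_nonneg (sub_nonneg.2 hxy) (mul_nonneg (by nlinarith : (0:ℝ) ≤ (1+a)^2+b^2 - 2*(1+a)) (by linarith : (0:ℝ) ≤ (1+x)+(1+y)))]

private lemma nik_key_abs {z : ℂ} (hz : 1 ≤ ‖z‖) {x y : ℝ} (hx : -1 ≤ x) (hxy : x ≤ y) (hy : y ≤ 1) :
    ‖(y : ℂ) - z‖ * (1 + x) ≤ ‖(x : ℂ) - z‖ * (1 + y) := by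
  have hxn : (0:ℝ) ≤ 1 + x := by linarith
  have hyn : (0:ℝ) ≤ 1 + y := by linarith
  have h1 : 0 ≤ ‖(y : ℂ) - z‖ * (1 + x) := mul_nonneg (norm_nonneg _) hxn
  have h2 : 0 ≤ ‖(x : ℂ) - z‖ * (1 + y) := mul_nonneg (norm_nonneg _) hyn
  rw [← Real.sqrt_sq h1, ← Real.sqrt_sq h2]
  apply Real.sqrt_le_sqrt
  have e1 : (‖(y : ℂ) - z‖)^2 = (y - z.re)^2 + z.im^2 := by
    rw [Complex.sq_norm, Complex.normSq_apply]; simp [Complex.sub_re, Complex.sub_im]; ring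
  have e2 : (‖(x : ℂ) - z‖)^2 = (x - z.re)^2 + z.im^2 := by
    rw [Complex.sq_norm, Complex.normSq_apply]; simp [Complex.sub_re, Complex.sub_im]; ring
  have ha : 1 ≤ z.re^2 + z.im^2 := by
    have := Complex.sq_norm z
    rw [Complex.normSq_apply] at this
    nlinarith [hz, norm_nonneg z]
  calc (‖(y : ℂ) - z‖ * (1 + x))^2 = ((y - z.re)^2 + z.im^2) * (1+x)^2 := by rw [mul_pow, e1]
    _ ≤ ((x - z.re)^2 + z.im^2) * (1+y)^2 := nik_sq_key z.re z.im x y ha hx hxy hy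
    _ = (‖(x : ℂ) - z‖ * (1 + y))^2 := by rw [mul_pow, e2]

private lemma nik_prod_aux (x y : ℝ) (hx : -1 ≤ x) (hxy : x ≤ y) (hy : y ≤ 1) :
    ∀ s : Multiset ℂ, (∀ z ∈ s, 1 ≤ ‖z‖) →
    (s.map fun z => ‖(y : ℂ) - z‖).prod * (1+x) ^ (Multiset.card s)
      ≤ (s.map fun z => ‖(x : ℂ) - z‖).prod * (1+y) ^ (Multiset.card s) := by
  intro s
  induction s using Multiset.induction with
  | empty => simp
  | cons z s ih =>
    intro h
    simp only [Multiset.map_cons, Multiset.prod_cons, Multiset.card_cons, pow_succ]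
    have h1 := nik_key_abs (h z (Multiset.mem_cons_self z s)) hx hxy hy
    have h2 := ih (fun w hw => h w (Multiset.mem_cons_of_mem hw))
    have hprodnn : 0 ≤ (s.map fun z => ‖(y : ℂ) - z‖).prod * (1+x) ^ (Multiset.card s) := by
      apply mul_nonneg
      · exact Multiset.prod_nonneg (by simp only [Multiset.mem_map]; rintro _ ⟨w, _, rfl⟩; exact norm_nonneg _)
      · exact pow_nonneg (by linarith) _
    calc ‖(y : ℂ) - z‖ * (s.map fun z => ‖(y : ℂ) - z‖).prod * ((1+x) ^ (Multiset.card s) * (1+x))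
        = (‖(y : ℂ) - z‖ * (1+x)) * ((s.map fun z => ‖(y : ℂ) - z‖).prod * (1+x) ^ (Multiset.card s)) := by ring
      _ ≤ (‖(x : ℂ) - z‖ * (1+y)) * ((s.map fun z => ‖(x : ℂ) - z‖).prod * (1+y) ^ (Multiset.card s)) := by
          apply mul_le_mul h1 h2 hprodnn (mul_nonneg (norm_nonneg _) (by linarith))
      _ = ‖(x : ℂ) - z‖ * (s.map fun z => ‖(x : ℂ) - z‖).prod * ((1+y) ^ (Multiset.card s) * (1+y)) := by ring

private lemma nik_abs_eval_eq (f : Polynomial ℝ) (t : ℝ) :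
    |f.eval t| = ‖algebraMap ℝ ℂ f.leadingCoeff‖ *
      ((f.map (algebraMap ℝ ℂ)).roots.map fun z => ‖(t : ℂ) - z‖).prod := by
  have hsplit : Splits (f.map (algebraMap ℝ ℂ)) := IsAlgClosed.splits _
  have heq := hsplit.eq_prod_roots
  rw [leadingCoeff_map] at heq
  have h0 : (f.map (algebraMap ℝ ℂ)).eval ↑t = algebraMap ℝ ℂ (f.eval t) := by
    rw [eval_map, ← aeval_def, show ((t:ℂ)) = algebraMap ℝ ℂ t from rfl,
      aeval_algebraMap_apply]
    simp
  have habs : ‖(f.map (algebraMap ℝ ℂ)).eval ↑t‖ = |f.eval t| := by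
    rw [h0]; exact (Complex.norm_real _).trans (Real.norm_eq_abs _)
  rw [← habs]
  conv_lhs => rw [heq]
  rw [eval_mul, eval_C, norm_mul, eval_multiset_prod, Multiset.map_map,
    show ∀ m : Multiset ℂ, ‖m.prod‖ = (m.map (‖·‖)).prod from fun m => map_multiset_prod (normHom (α := ℂ)) m,
    Multiset.map_map]
  congr 2
  ext z
  simp

private lemma nik_pointwise_left (n : ℕ) (f : Polynomial ℝ) (hdeg : f.natDegree ≤ n)
    (hroots : ∀ z : ℂ, Polynomial.aeval z f = 0 → 1 ≤ ‖z‖)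
    {x y : ℝ} (hx : -1 ≤ x) (hxy : x ≤ y) (hy : y ≤ 1) :
    |f.eval y| * (1+x)^n ≤ |f.eval x| * (1+y)^n := by
  set F := f.map (algebraMap ℝ ℂ) with hF
  set s := F.roots with hs
  have hcard : Multiset.card s ≤ n := by
    calc Multiset.card s ≤ F.natDegree := card_roots' F
      _ ≤ f.natDegree := natDegree_map_le
      _ ≤ n := hdeg
  have hmem : ∀ z ∈ s, 1 ≤ ‖z‖ := by
    intro z hz
    apply hroots
    have : IsRoot F z := isRoot_of_mem_roots hz
    rwa [IsRoot, eval_map, ← aeval_def] at this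
  have hxn : (0:ℝ) ≤ 1 + x := by linarith
  have hyn : (0:ℝ) ≤ 1 + y := by linarith
  have key := nik_prod_aux x y hx hxy hy s hmem
  have hprodx : 0 ≤ (s.map fun z => ‖(x : ℂ) - z‖).prod :=
    Multiset.prod_nonneg (by simp only [Multiset.mem_map]; rintro _ ⟨w, _, rfl⟩; exact norm_nonneg _)
  have hpowsplit : ∀ t : ℝ, (0:ℝ) ≤ 1 + t → (1+t)^n = (1+t)^(Multiset.card s) * (1+t)^(n - Multiset.card s) := by
    intro t ht
    rw [← pow_add, Nat.add_sub_cancel' hcard]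
  rw [nik_abs_eval_eq f x, nik_abs_eval_eq f y, hpowsplit x hxn, hpowsplit y hyn, ← hF, ← hs]
  have hlc : 0 ≤ ‖algebraMap ℝ ℂ f.leadingCoeff‖ := norm_nonneg _
  have h2 : (1+x)^(n - Multiset.card s) ≤ (1+y)^(n - Multiset.card s) :=
    pow_le_pow_left₀ hxn (by linarith) _
  calc ‖algebraMap ℝ ℂ f.leadingCoeff‖ * (s.map fun z => ‖(y : ℂ) - z‖).prod *
        ((1+x)^(Multiset.card s) * (1+x)^(n - Multiset.card s))
      = ‖algebraMap ℝ ℂ f.leadingCoeff‖ *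
        (((s.map fun z => ‖(y : ℂ) - z‖).prod * (1+x)^(Multiset.card s)) * (1+x)^(n - Multiset.card s)) := by ring
    _ ≤ ‖algebraMap ℝ ℂ f.leadingCoeff‖ *
        (((s.map fun z => ‖(x : ℂ) - z‖).prod * (1+y)^(Multiset.card s)) * (1+y)^(n - Multiset.card s)) := by
        apply mul_le_mul_of_nonneg_left _ hlc
        apply mul_le_mul key h2 (pow_nonneg hxn _) (mul_nonneg hprodx (pow_nonneg hyn _))
    _ = ‖algebraMap ℝ ℂ f.leadingCoeff‖ * (s.map fun z => ‖(x : ℂ) - z‖).prod *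
        ((1+y)^(Multiset.card s) * (1+y)^(n - Multiset.card s)) := by ring

private lemma nik_side (n : ℕ) (q : ℝ) (hq : 0 < q) (f : Polynomial ℝ) (hdeg : f.natDegree ≤ n)
    (hroots : ∀ z : ℂ, Polynomial.aeval z f = 0 → 1 ≤ ‖z‖)
    {y : ℝ} (hy : -1 ≤ y) (hy1 : y ≤ 1) :
    |f.eval y| ^ q * ((1+y) / (q * n + 1)) ≤ ∫ x in (-1:ℝ)..y, |f.eval x| ^ q := by
  set r : ℝ := q * n with hr
  have hrnn : 0 ≤ r := mul_nonneg hq.le (Nat.cast_nonneg n)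
  have hr1 : 0 < r + 1 := by linarith
  rcases eq_or_lt_of_le hy with rfl | hylt
  · simp
  · have h1y : (0:ℝ) < 1 + y := by linarith
    have hcont : Continuous fun x : ℝ => |f.eval x| ^ q :=
      (f.continuous.abs).rpow_const (fun x => Or.inr hq.le)
    have hcont2 : Continuous fun x : ℝ => (1 + x) ^ r :=
      (continuous_const.add continuous_id).rpow_const (fun x => Or.inr hrnn)
    have hpt : ∀ x ∈ Set.Icc (-1:ℝ) y, |f.eval y| ^ q * (1+x) ^ r ≤ |f.eval x| ^ q * (1+y) ^ r := by
      intro x hx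
      obtain ⟨hx1, hx2⟩ := hx
      have hxn : (0:ℝ) ≤ 1 + x := by linarith
      have h := nik_pointwise_left n f hdeg hroots hx1 hx2 hy1
      have h' := Real.rpow_le_rpow (mul_nonneg (abs_nonneg _) (pow_nonneg hxn n)) h hq.le
      rw [Real.mul_rpow (abs_nonneg _) (pow_nonneg hxn n),
        Real.mul_rpow (abs_nonneg _) (pow_nonneg h1y.le n)] at h'
      calc |f.eval y| ^ q * (1+x) ^ r = |f.eval y| ^ q * ((1+x) ^ (n:ℕ)) ^ q := by
            rw [← Real.rpow_natCast (1+x) n, ← Real.rpow_mul hxn, hr, mul_comm q (n:ℝ)]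
        _ ≤ |f.eval x| ^ q * ((1+y) ^ (n:ℕ)) ^ q := h'
        _ = |f.eval x| ^ q * (1+y) ^ r := by
            rw [← Real.rpow_natCast (1+y) n, ← Real.rpow_mul h1y.le, hr, mul_comm q (n:ℝ)]
    have hint : (∫ x in (-1:ℝ)..y, |f.eval y| ^ q * (1+x) ^ r) ≤ ∫ x in (-1:ℝ)..y, |f.eval x| ^ q * (1+y) ^ r := by
      apply intervalIntegral.integral_mono_on hy
      · exact ((continuous_const.mul hcont2)).intervalIntegrable _ _
      · exact ((hcont.mul continuous_const)).intervalIntegrable _ _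
      · exact hpt
    have hleft : (∫ x in (-1:ℝ)..y, |f.eval y| ^ q * (1+x) ^ r)
        = |f.eval y| ^ q * ((1+y) ^ (r+1) / (r+1)) := by
      rw [intervalIntegral.integral_const_mul]
      congr 1
      have : ∀ x : ℝ, (1 + x) ^ r = (x + 1) ^ r := by intro x; rw [add_comm]
      simp_rw [this]
      rw [intervalIntegral.integral_comp_add_right (fun u => u ^ r) 1]
      norm_num
      rw [integral_rpow (Or.inl (by linarith : (-1:ℝ) < r)), Real.zero_rpow hr1.ne', show (1:ℝ)+y = y+1 by ring]
      ring
    have hright : (∫ x in (-1:ℝ)..y, |f.eval x| ^ q * (1+y) ^ r)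
        = (∫ x in (-1:ℝ)..y, |f.eval x| ^ q) * (1+y) ^ r := by
      rw [intervalIntegral.integral_mul_const]
    rw [hleft, hright] at hint
    have hpow : (1+y) ^ (r+1) = (1+y) ^ r * (1+y) := by
      rw [Real.rpow_add h1y, Real.rpow_one]
    rw [hpow] at hint
    have hrpos : (0:ℝ) < (1+y) ^ r := Real.rpow_pos_of_pos h1y r
    have hint' : (|f.eval y| ^ q * ((1+y) / (r+1))) * (1+y) ^ r ≤ (∫ x in (-1:ℝ)..y, |f.eval x| ^ q) * (1+y) ^ r := by
      calc (|f.eval y| ^ q * ((1+y) / (r+1))) * (1+y) ^ r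
          = |f.eval y| ^ q * ((1+y) ^ r * (1+y) / (r+1)) := by ring
        _ ≤ _ := hint
    exact le_of_mul_le_mul_right hint' hrpos

private lemma nik_global_bound (n : ℕ) (q : ℝ) (hq : 0 < q) (f : Polynomial ℝ) (hdeg : f.natDegree ≤ n)
    (hroots : ∀ z : ℂ, Polynomial.aeval z f = 0 → 1 ≤ ‖z‖)
    {y : ℝ} (hy : -1 ≤ y) (hy1 : y ≤ 1) :
    |f.eval y| ^ q * (2 / (q * n + 1)) ≤ ∫ x in (-1:ℝ)..1, |f.eval x| ^ q := by
  have hcont : Continuous fun x : ℝ => |f.eval x| ^ q :=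
    (f.continuous.abs).rpow_const (fun x => Or.inr hq.le)
  set g : Polynomial ℝ := f.comp (-X) with hg
  have hgeval : ∀ t : ℝ, g.eval t = f.eval (-t) := by
    intro t; rw [hg, eval_comp]; simp
  have hgdeg : g.natDegree ≤ n := by
    rw [hg, natDegree_comp]
    simpa using hdeg
  have hgroots : ∀ z : ℂ, Polynomial.aeval z g = 0 → 1 ≤ ‖z‖ := by
    intro z hz
    rw [hg, aeval_comp] at hz
    simp only [map_neg, aeval_X] at hz
    have := hroots (-z) hz
    rwa [norm_neg] at this
  have h1 := nik_side n q hq f hdeg hroots hy hy1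
  have h2 := nik_side n q hq g hgdeg hgroots (by linarith : (-1:ℝ) ≤ -y) (by linarith : (-y:ℝ) ≤ 1)
  rw [hgeval (-y), neg_neg] at h2
  have h2' : |f.eval y| ^ q * ((1 - y) / (q * n + 1)) ≤ ∫ x in y..(1:ℝ), |f.eval x| ^ q := by
    have hid : (∫ x in (-1:ℝ)..(-y), |g.eval x| ^ q) = ∫ x in y..(1:ℝ), |f.eval x| ^ q := by
      have : (fun x : ℝ => |g.eval x| ^ q) = fun x : ℝ => |f.eval (-x)| ^ q := by
        funext x; rw [hgeval x]
      rw [this, intervalIntegral.integral_comp_neg (fun x => |f.eval x| ^ q)]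
      norm_num
    rw [hid] at h2
    calc |f.eval y| ^ q * ((1 - y) / (q * n + 1)) = |f.eval y| ^ q * ((1 + -y) / (q * n + 1)) := by ring_nf
      _ ≤ _ := h2
  have hsplit : (∫ x in (-1:ℝ)..y, |f.eval x| ^ q) + (∫ x in y..(1:ℝ), |f.eval x| ^ q)
      = ∫ x in (-1:ℝ)..1, |f.eval x| ^ q :=
    intervalIntegral.integral_add_adjacent_intervals (hcont.intervalIntegrable _ _) (hcont.intervalIntegrable _ _)
  have : |f.eval y| ^ q * ((1+y) / (q * n + 1)) + |f.eval y| ^ q * ((1 - y) / (q * n + 1))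
      = |f.eval y| ^ q * (2 / (q * n + 1)) := by ring
  linarith

theorem nikolskii_constrained (n : ℕ) (hn : 0 < n) (p q : ℝ) (hq : 0 < q) (hqp : q < p)
    (f : Polynomial ℝ) (hdeg : f.natDegree ≤ n)
    (hroots : ∀ z : ℂ, Polynomial.aeval z f = 0 → 1 ≤ ‖z‖) :
    (∫ x in (-1 : ℝ)..1, |f.eval x| ^ p) ^ (1 / p) ≤
      ((q * n + 1) / 2) ^ (1 / q - 1 / p) * (∫ x in (-1 : ℝ)..1, |f.eval x| ^ q) ^ (1 / q) := by
  have hp : 0 < p := hq.trans hqp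
  have hqn1 : (0:ℝ) < q * n + 1 := by positivity
  set A : ℝ := (q * n + 1) / 2 with hA
  have hApos : 0 < A := by positivity
  set Iq : ℝ := ∫ x in (-1:ℝ)..1, |f.eval x| ^ q with hIq
  set Ip : ℝ := ∫ x in (-1:ℝ)..1, |f.eval x| ^ p with hIp
  have hcontq : Continuous fun x : ℝ => |f.eval x| ^ q :=
    (f.continuous.abs).rpow_const (fun x => Or.inr hq.le)
  have hcontp : Continuous fun x : ℝ => |f.eval x| ^ p :=
    (f.continuous.abs).rpow_const (fun x => Or.inr hp.le)
  have hIqnn : 0 ≤ Iq := by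
    apply intervalIntegral.integral_nonneg (by norm_num : (-1:ℝ) ≤ 1)
    intro x _; positivity
  have hIpnn : 0 ≤ Ip := by
    apply intervalIntegral.integral_nonneg (by norm_num : (-1:ℝ) ≤ 1)
    intro x _; positivity
  have hq_bound : ∀ y ∈ Set.Icc (-1:ℝ) 1, |f.eval y| ^ q ≤ A * Iq := by
    intro y hy
    have h := nik_global_bound n q hq f hdeg hroots hy.1 hy.2
    have h2 : A * (|f.eval y| ^ q * (2 / (q * n + 1))) ≤ A * Iq :=
      mul_le_mul_of_nonneg_left h hApos.le
    calc |f.eval y| ^ q = A * (|f.eval y| ^ q * (2 / (q * n + 1))) := by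
          rw [hA]; field_simp
      _ ≤ A * Iq := h2
  set e : ℝ := (p - q) / q with he
  have hepos : 0 < e := by
    apply div_pos (by linarith) hq
  set C : ℝ := (A * Iq) ^ e with hC
  have hCnn : 0 ≤ C := Real.rpow_nonneg (by positivity) _
  have hqe : q * e + q = p := by rw [he]; field_simp; ring
  have hp_bound : ∀ y ∈ Set.Icc (-1:ℝ) 1, |f.eval y| ^ p ≤ C * |f.eval y| ^ q := by
    intro y hy
    rcases eq_or_lt_of_le (abs_nonneg (f.eval y)) with h0 | h0
    · rw [← h0, Real.zero_rpow hp.ne', Real.zero_rpow hq.ne', mul_zero]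
    · calc |f.eval y| ^ p = |f.eval y| ^ (q*e+q) := by rw [hqe]
        _ = |f.eval y| ^ (q*e) * |f.eval y| ^ q := Real.rpow_add h0 _ _
        _ = (|f.eval y| ^ q) ^ e * |f.eval y| ^ q := by rw [Real.rpow_mul (abs_nonneg _)]
        _ ≤ C * |f.eval y| ^ q := by
            apply mul_le_mul_of_nonneg_right _ (Real.rpow_nonneg (abs_nonneg _) _)
            exact Real.rpow_le_rpow (Real.rpow_nonneg (abs_nonneg _) _) (hq_bound y hy) hepos.le
  have hIpC : Ip ≤ C * Iq := by
    calc Ip ≤ ∫ x in (-1:ℝ)..1, C * |f.eval x| ^ q := by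
          apply intervalIntegral.integral_mono_on (by norm_num : (-1:ℝ) ≤ 1)
            (hcontp.intervalIntegrable _ _) ((continuous_const.mul hcontq).intervalIntegrable _ _) hp_bound
      _ = C * Iq := by rw [intervalIntegral.integral_const_mul]
  rcases eq_or_lt_of_le hIqnn with hIq0 | hIqpos
  · have hC0 : C = 0 := by
      rw [hC, ← hIq0, mul_zero, Real.zero_rpow hepos.ne']
    have hIp0 : Ip = 0 := le_antisymm (by rw [hC0, zero_mul] at hIpC; exact hIpC) hIpnn
    rw [hIp0, ← hIq0, Real.zero_rpow (by positivity : (1:ℝ)/p ≠ 0), Real.zero_rpow (by positivity : (1:ℝ)/q ≠ 0), mul_zero]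
  · have hfinal : Ip ≤ A ^ e * Iq ^ (e+1) := by
      calc Ip ≤ C * Iq := hIpC
        _ = A ^ e * Iq ^ e * Iq := by rw [hC, Real.mul_rpow hApos.le hIqnn]
        _ = A ^ e * Iq ^ (e+1) := by
            rw [Real.rpow_add hIqpos, Real.rpow_one]; ring
    have hstep : Ip ^ ((1:ℝ)/p) ≤ (A ^ e * Iq ^ (e+1)) ^ ((1:ℝ)/p) :=
      Real.rpow_le_rpow hIpnn hfinal (by positivity)
    calc Ip ^ ((1:ℝ)/p) ≤ (A ^ e * Iq ^ (e+1)) ^ ((1:ℝ)/p) := hstep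
      _ = (A ^ e) ^ ((1:ℝ)/p) * (Iq ^ (e+1)) ^ ((1:ℝ)/p) :=
          Real.mul_rpow (Real.rpow_nonneg hApos.le _) (Real.rpow_nonneg hIqnn _)
      _ = A ^ (e * (1/p)) * Iq ^ ((e+1) * (1/p)) := by
          rw [← Real.rpow_mul hApos.le, ← Real.rpow_mul hIqnn]
      _ = A ^ (1/q - 1/p) * Iq ^ ((1:ℝ)/q) := by
          congr 1
          · congr 1
            rw [he]; field_simp
          · congr 1
            rw [he]; field_simp; ring
end

section
/- Let n be a positive integer and q > 0. If f is a real polynomial of degree at most n with no zeros in the open unit disk of ℂ, then max_{x ∈ [-1,1]} |f(x)| ≤ ((qn+1)/2)^{1/q} (∫_{-1}^1 |f(x)|^q dx)^{1/q}. -/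
open Polynomial

private lemma sq_key (a b x y : ℝ) (h : 1 ≤ a^2 + b^2) (hy : -1 ≤ y) (hxy : y ≤ x) (hx : x ≤ 1) :
    ((x-a)^2 + b^2) * (1+y)^2 ≤ ((y-a)^2 + b^2) * (1+x)^2 := by
  nlinarith [mul_nonneg (mul_nonneg (sub_nonneg.2 hxy) (by linarith : (0:ℝ) ≤ 1+y)) (by linarith : (0:ℝ) ≤ 1+x),
    sq_nonneg (x-y), sq_nonneg b, sq_nonneg (a+1), sq_nonneg (a-1),
    mul_nonneg (mul_nonneg (sub_nonneg.2 hxy) (by linarith : (0:ℝ) ≤ 1-x)) (by linarith : (0:ℝ) ≤ 1+y),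
    mul_nonneg (sub_nonneg.2 hxy) (sub_nonneg.2 hxy)]

private lemma key_root (z : ℂ) (hz : 1 ≤ ‖z‖) {x y : ℝ} (hy : -1 ≤ y) (hxy : y ≤ x)
    (hx : x ≤ 1) :
    ‖(x:ℂ) - z‖ * (1+y) ≤ ‖(y:ℂ) - z‖ * (1+x) := by
  have h1 : (0:ℝ) ≤ 1 + y := by linarith
  have h2 : (0:ℝ) ≤ 1 + x := by linarith
  have hsq : (‖(x:ℂ) - z‖)^2 * (1+y)^2 ≤ (‖(y:ℂ) - z‖)^2 * (1+x)^2 := by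
    rw [Complex.sq_norm, Complex.sq_norm, Complex.normSq_apply, Complex.normSq_apply]
    simp only [Complex.sub_re, Complex.sub_im, Complex.ofReal_re, Complex.ofReal_im, zero_sub,
      neg_sq]
    have habs : 1 ≤ z.re^2 + z.im^2 := by
      have := Complex.sq_norm z
      rw [Complex.normSq_apply] at this
      nlinarith [hz, norm_nonneg z]
    have := sq_key z.re z.im x y habs hy hxy hx
    nlinarith [this]
  refine (pow_le_pow_iff_left₀ (mul_nonneg (norm_nonneg _) h1)
    (mul_nonneg (norm_nonneg _) h2) (two_ne_zero)).1 ?_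
  calc (‖(x:ℂ) - z‖ * (1+y))^2 = (‖(x:ℂ) - z‖)^2 * (1+y)^2 := by ring
  _ ≤ (‖(y:ℂ) - z‖)^2 * (1+x)^2 := hsq
  _ = (‖(y:ℂ) - z‖ * (1+x))^2 := by ring

private lemma prod_key (s : Multiset ℂ) (hs : ∀ z ∈ s, 1 ≤ ‖z‖) {x y : ℝ}
    (hy : -1 ≤ y) (hxy : y ≤ x) (hx : x ≤ 1) :
    (s.map fun z => ‖(x:ℂ) - z‖).prod * (1+y)^(Multiset.card s) ≤
    (s.map fun z => ‖(y:ℂ) - z‖).prod * (1+x)^(Multiset.card s) := by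
  induction s using Multiset.induction_on with
  | empty => simp
  | cons z s ih =>
    have hz := hs z (Multiset.mem_cons_self z s)
    have ihs := ih (fun w hw => hs w (Multiset.mem_cons_of_mem hw))
    simp only [Multiset.map_cons, Multiset.prod_cons, Multiset.card_cons, pow_succ]
    have h1 : (0:ℝ) ≤ 1 + y := by linarith
    have h2 : (0:ℝ) ≤ 1 + x := by linarith
    calc ‖(x:ℂ) - z‖ * (s.map fun z => ‖(x:ℂ) - z‖).prod *
          ((1+y)^(Multiset.card s) * (1+y))
        = (‖(x:ℂ) - z‖ * (1+y)) *
          ((s.map fun z => ‖(x:ℂ) - z‖).prod * (1+y)^(Multiset.card s)) := by ring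
      _ ≤ (‖(y:ℂ) - z‖ * (1+x)) *
          ((s.map fun z => ‖(y:ℂ) - z‖).prod * (1+x)^(Multiset.card s)) := by
          refine mul_le_mul (key_root z hz hy hxy hx) ihs ?_ ?_
          · exact mul_nonneg (Multiset.prod_nonneg (by
              intro u hu
              obtain ⟨w, _, rfl⟩ := Multiset.mem_map.1 hu
              exact norm_nonneg _)) (pow_nonneg h1 _)
          · exact mul_nonneg (norm_nonneg _) h2
      _ = ‖(y:ℂ) - z‖ * (s.map fun z => ‖(y:ℂ) - z‖).prod *
          ((1+x)^(Multiset.card s) * (1+x)) := by ring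

private lemma poly_key (f : Polynomial ℝ) (hf : f ≠ 0)
    (hroots : ∀ z : ℂ, Polynomial.aeval z f = 0 → 1 ≤ ‖z‖) {x y : ℝ}
    (hy : -1 ≤ y) (hxy : y ≤ x) (hx : x ≤ 1) :
    |f.eval x| * (1+y)^f.natDegree ≤ |f.eval y| * (1+x)^f.natDegree := by
  set F : Polynomial ℂ := f.map (algebraMap ℝ ℂ) with hF
  have hF0 : F ≠ 0 := by
    simpa [hF] using (Polynomial.map_ne_zero_iff (algebraMap ℝ ℂ).injective).2 hf
  have hsplit : F.Splits := IsAlgClosed.splits F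
  have heq : F = C F.leadingCoeff * (F.roots.map fun a => X - C a).prod :=
    hsplit.eq_prod_roots
  have hcard : Multiset.card F.roots = f.natDegree := by
    rw [(splits_iff_card_roots).1 hsplit, hF, natDegree_map]
  have heval : ∀ t : ℝ, |f.eval t| =
      ‖F.leadingCoeff‖ * (F.roots.map fun z => ‖(t:ℂ) - z‖).prod := by
    intro t
    have h1 : F.eval (t:ℂ) = algebraMap ℝ ℂ (f.eval t) := by
      have ht : ((t:ℂ)) = algebraMap ℝ ℂ t := rfl
      rw [hF, eval_map, ← aeval_def, ht, aeval_algebraMap_apply]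
      simp [aeval_def, eval₂_eq_eval_map]
    have h2 : ‖F.eval (t:ℂ)‖ = |f.eval t| := by
      rw [h1]; exact (Complex.norm_real _).trans (Real.norm_eq_abs _)
    rw [← h2]
    conv_lhs => rw [heq]
    rw [eval_mul, eval_C, norm_mul]
    congr 1
    rw [eval_multiset_prod, show ∀ m : Multiset ℂ, ‖m.prod‖ = (m.map norm).prod from fun m => map_multiset_prod (normHom : ℂ →*₀ ℝ) m, Multiset.map_map, Multiset.map_map]
    congr 1
    ext z
    simp
  have hmem : ∀ z ∈ F.roots, 1 ≤ ‖z‖ := by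
    intro z hz
    apply hroots
    have := (mem_roots hF0).1 hz
    rw [aeval_def, eval₂_eq_eval_map]
    exact this
  rw [heval x, heval y, mul_assoc, mul_assoc, ← hcard]
  exact mul_le_mul_of_nonneg_left (prod_key F.roots hmem hy hxy hx) (norm_nonneg _)

private lemma poly_key' (f : Polynomial ℝ) (hf : f ≠ 0)
    (hroots : ∀ z : ℂ, Polynomial.aeval z f = 0 → 1 ≤ ‖z‖) {x y : ℝ}
    (hx : -1 ≤ x) (hxy : x ≤ y) (hy : y ≤ 1) :
    |f.eval x| * (1-y)^f.natDegree ≤ |f.eval y| * (1-x)^f.natDegree := by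
  set g : Polynomial ℝ := f.comp (-X) with hg
  have hcomp : ∀ t : ℝ, g.eval t = f.eval (-t) := by
    intro t; simp [hg, eval_comp]
  have hgf : g.comp (-X) = f := by
    rw [hg, comp_assoc]
    simp
  have hg0 : g ≠ 0 := by
    intro h
    rw [h, zero_comp] at hgf
    exact hf hgf.symm
  have hgdeg : g.natDegree = f.natDegree := by
    rw [hg, natDegree_comp]
    simp
  have hgroots : ∀ z : ℂ, Polynomial.aeval z g = 0 → 1 ≤ ‖z‖ := by
    intro z hz
    rw [hg, aeval_comp] at hz
    have := hroots _ hz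
    simpa using this
  have := poly_key g hg0 hgroots (x := -x) (y := -y) (by linarith) (by linarith) (by linarith)
  rw [hcomp, hcomp, hgdeg, neg_neg, neg_neg] at this
  calc |f.eval x| * (1-y)^f.natDegree = |f.eval x| * (1 + -y)^f.natDegree := by ring_nf
  _ ≤ |f.eval y| * (1 + -x)^f.natDegree := this
  _ = |f.eval y| * (1-x)^f.natDegree := by ring_nf

private lemma int_aux (c p : ℝ) (hc : 0 < c) (hp : 0 < p) :
    (∫ u in (0:ℝ)..c, (u/c)^p) = c/(p+1) := by
  rw [intervalIntegral.integral_comp_div (fun u : ℝ => u ^ p) hc.ne']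
  rw [zero_div, div_self hc.ne']
  rw [integral_rpow (Or.inl (by linarith : (-1:ℝ) < p))]
  rw [Real.one_rpow, Real.zero_rpow (by linarith : p + 1 ≠ 0)]
  rw [smul_eq_mul]
  ring

theorem nikolskii_constrained_sup (n : ℕ) (hn : 0 < n) (q : ℝ) (hq : 0 < q)
    (f : Polynomial ℝ) (hdeg : f.natDegree ≤ n)
    (hroots : ∀ z : ℂ, Polynomial.aeval z f = 0 → 1 ≤ ‖z‖) :
    (⨆ x : Set.Icc (-1 : ℝ) 1, |f.eval (x : ℝ)|) ≤
      ((q * n + 1) / 2) ^ (1 / q) * (∫ x in (-1 : ℝ)..1, |f.eval (x : ℝ)| ^ q) ^ (1 / q) := by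
  have hf0 : f ≠ 0 := by
    intro h
    have := hroots 0 (by simp [h])
    rw [norm_zero] at this
    linarith
  have hcont : Continuous fun t : ℝ => |f.eval t| := f.continuous.abs
  have hcontq : Continuous fun t : ℝ => |f.eval t| ^ q :=
    hcont.rpow_const (fun t => Or.inr hq.le)
  obtain ⟨x₀, hx₀mem, hmax⟩ := isCompact_Icc.exists_isMaxOn
    (Set.nonempty_Icc.2 (by norm_num : (-1:ℝ) ≤ 1)) hcont.continuousOn
  obtain ⟨hx₀1, hx₀2⟩ := hx₀mem
  set M : ℝ := |f.eval x₀| with hM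
  have hM0 : 0 ≤ M := abs_nonneg _
  set p : ℝ := (n : ℝ) * q with hp'
  have hp : 0 < p := by positivity
  set I : ℝ := ∫ x in (-1:ℝ)..1, |f.eval x| ^ q with hI'
  -- pointwise lower bounds
  have hptL : ∀ y ∈ Set.Icc (-1:ℝ) x₀, (0 < 1 + x₀) →
      M ^ q * ((1+y)/(1+x₀)) ^ p ≤ |f.eval y| ^ q := by
    intro y hy hc
    obtain ⟨hy1, hy2⟩ := hy
    set r : ℝ := (1+y)/(1+x₀) with hr
    have hr0 : 0 ≤ r := by
      apply div_nonneg <;> linarith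
    have hr1 : r ≤ 1 := by
      rw [div_le_one hc]; linarith
    have hk := poly_key f hf0 hroots hy1 hy2 hx₀2
    have step1 : M * r ^ f.natDegree ≤ |f.eval y| := by
      rw [hr, div_pow, ← mul_div_assoc, div_le_iff₀ (by positivity)]
      exact hk
    have step2 : M * r ^ n ≤ |f.eval y| := by
      refine le_trans ?_ step1
      exact mul_le_mul_of_nonneg_left (pow_le_pow_of_le_one hr0 hr1 hdeg) hM0
    calc M ^ q * r ^ p = (M * r ^ n) ^ q := by
          rw [Real.mul_rpow hM0 (pow_nonneg hr0 _), ← Real.rpow_natCast r n,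
            ← Real.rpow_mul hr0]
      _ ≤ |f.eval y| ^ q := Real.rpow_le_rpow (by positivity) step2 hq.le
  have hptR : ∀ y ∈ Set.Icc x₀ (1:ℝ), (0 < 1 - x₀) →
      M ^ q * ((1-y)/(1-x₀)) ^ p ≤ |f.eval y| ^ q := by
    intro y hy hc
    obtain ⟨hy1, hy2⟩ := hy
    set r : ℝ := (1-y)/(1-x₀) with hr
    have hr0 : 0 ≤ r := by
      apply div_nonneg <;> linarith
    have hr1 : r ≤ 1 := by
      rw [div_le_one hc]; linarith
    have hk := poly_key' f hf0 hroots hx₀1 hy1 hy2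
    have step1 : M * r ^ f.natDegree ≤ |f.eval y| := by
      rw [hr, div_pow, ← mul_div_assoc, div_le_iff₀ (by positivity)]
      exact hk
    have step2 : M * r ^ n ≤ |f.eval y| := by
      refine le_trans ?_ step1
      exact mul_le_mul_of_nonneg_left (pow_le_pow_of_le_one hr0 hr1 hdeg) hM0
    calc M ^ q * r ^ p = (M * r ^ n) ^ q := by
          rw [Real.mul_rpow hM0 (pow_nonneg hr0 _), ← Real.rpow_natCast r n,
            ← Real.rpow_mul hr0]
      _ ≤ |f.eval y| ^ q := Real.rpow_le_rpow (by positivity) step2 hq.le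
  -- integral lower bounds on each piece
  have hIL : M ^ q * ((1 + x₀)/(p+1)) ≤ ∫ y in (-1:ℝ)..x₀, |f.eval y| ^ q := by
    rcases eq_or_lt_of_le (by linarith : (0:ℝ) ≤ 1 + x₀) with h0 | h0
    · have hx : x₀ = -1 := by linarith
      rw [hx]
      simp [← h0]
    · have hcg : Continuous fun y : ℝ => M ^ q * ((1+y)/(1+x₀)) ^ p := by
        apply Continuous.mul continuous_const
        exact ((continuous_const.add continuous_id).div_const _).rpow_const
          (fun t => Or.inr hp.le)
      have hmono := intervalIntegral.integral_mono_on (by linarith : (-1:ℝ) ≤ x₀)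
        (hcg.intervalIntegrable (μ := MeasureTheory.volume) _ _)
        (hcontq.intervalIntegrable (μ := MeasureTheory.volume) _ _)
        (fun y hy => hptL y hy h0)
      refine le_trans (le_of_eq ?_) hmono
      rw [intervalIntegral.integral_const_mul]
      congr 1
      have : (∫ y in (-1:ℝ)..x₀, ((1+y)/(1+x₀)) ^ p)
          = ∫ y in (-1:ℝ)..x₀, (fun u : ℝ => (u/(1+x₀)) ^ p) (y + 1) := by
        apply intervalIntegral.integral_congr
        intro y _
        simp [add_comm]
      rw [this, intervalIntegral.integral_comp_add_right (fun u : ℝ => (u/(1+x₀)) ^ p) 1]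
      norm_num
      rw [show x₀ + 1 = 1 + x₀ by ring, int_aux _ _ h0 hp]
  have hIR : M ^ q * ((1 - x₀)/(p+1)) ≤ ∫ y in x₀..(1:ℝ), |f.eval y| ^ q := by
    rcases eq_or_lt_of_le (by linarith : (0:ℝ) ≤ 1 - x₀) with h0 | h0
    · have hx : x₀ = 1 := by linarith
      rw [hx]
      simp [← h0]
    · have hcg : Continuous fun y : ℝ => M ^ q * ((1-y)/(1-x₀)) ^ p := by
        apply Continuous.mul continuous_const
        exact ((continuous_const.sub continuous_id).div_const _).rpow_const
          (fun t => Or.inr hp.le)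
      have hmono := intervalIntegral.integral_mono_on (by linarith : x₀ ≤ (1:ℝ))
        (hcg.intervalIntegrable (μ := MeasureTheory.volume) _ _)
        (hcontq.intervalIntegrable (μ := MeasureTheory.volume) _ _)
        (fun y hy => hptR y hy h0)
      refine le_trans (le_of_eq ?_) hmono
      rw [intervalIntegral.integral_const_mul]
      congr 1
      rw [intervalIntegral.integral_comp_sub_left (fun u : ℝ => (u/(1-x₀)) ^ p) 1]
      norm_num
      rw [int_aux _ _ h0 hp]
  have hsplitI : (∫ y in (-1:ℝ)..x₀, |f.eval y| ^ q) + (∫ y in x₀..(1:ℝ), |f.eval y| ^ q) = I :=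
    intervalIntegral.integral_add_adjacent_intervals (hcontq.intervalIntegrable _ _)
      (hcontq.intervalIntegrable _ _)
  have hItot : M ^ q * (2/(p+1)) ≤ I := by
    rw [← hsplitI]
    have : M ^ q * (2/(p+1)) = M ^ q * ((1+x₀)/(p+1)) + M ^ q * ((1-x₀)/(p+1)) := by ring
    rw [this]
    exact add_le_add hIL hIR
  have hI0 : 0 ≤ I := le_trans (by positivity) hItot
  have hkey : M ^ q ≤ (p+1)/2 * I := by
    have h2 : (0:ℝ) < 2/(p+1) := by positivity
    calc M ^ q = (M ^ q * (2/(p+1))) * ((p+1)/2) := by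
          field_simp
      _ ≤ I * ((p+1)/2) := by
          apply mul_le_mul_of_nonneg_right hItot (by positivity)
      _ = (p+1)/2 * I := by ring
  have hMle : M ≤ ((q * n + 1)/2) ^ (1/q) * I ^ (1/q) := by
    have hqn : q * (n:ℝ) + 1 = p + 1 := by rw [hp']; ring
    calc M = (M ^ q) ^ (1/q) := by
          rw [← Real.rpow_mul hM0, one_div, mul_inv_cancel₀ hq.ne', Real.rpow_one]
      _ ≤ (((p+1)/2) * I) ^ (1/q) :=
          Real.rpow_le_rpow (by positivity) hkey (by positivity)
      _ = ((p+1)/2) ^ (1/q) * I ^ (1/q) := Real.mul_rpow (by positivity) hI0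
      _ = ((q * n + 1)/2) ^ (1/q) * I ^ (1/q) := by rw [hqn]
  refine le_trans ?_ hMle
  haveI : Nonempty (Set.Icc (-1:ℝ) 1) := ⟨⟨0, by norm_num⟩⟩
  exact ciSup_le (fun t => hmax t.2)
end

section
/- Let d be a positive integer and let f be a real polynomial of degree at most d such that f'(x) = Σ_{j=0}^{d-1} a_j (1-x)^j (x+1)^{d-1-j} with all a_j ≥ 0. Then max_{x ∈ [-1,1]} |f'(x)| ≤ (d/2)(f(1) - f(-1)) ≤ d · max_{x ∈ [-1,1]} |f(x)|. -/
open Finset Polynomial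

lemma beta_int (j : ℕ) : ∀ k : ℕ, (∫ x in (-1:ℝ)..1, (1-x)^j * (x+1)^k)
    = 2^(j+k+1) * ((j.factorial : ℝ) * (k.factorial : ℝ)) / ((j+k+1).factorial : ℝ) := by
  induction j with
  | zero =>
    intro k
    have h := intervalIntegral.integral_comp_add_right (a := (-1:ℝ)) (b := 1) (fun y : ℝ => y^k) 1
    simp only [pow_zero, one_mul, zero_add]
    norm_num at h
    rw [h, Nat.factorial_succ]
    have hk : ((k:ℝ)+1) ≠ 0 := by positivity
    have hkf : ((k.factorial : ℝ)) ≠ 0 := by positivity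
    push_cast
    field_simp
    ring
  | succ j ih =>
    intro k
    have hu : ∀ x ∈ Set.uIcc (-1:ℝ) 1, HasDerivAt (fun x : ℝ => (1-x)^(j+1))
        (-((j:ℝ)+1) * (1-x)^j) x := by
      intro x _
      have h := ((hasDerivAt_id x).const_sub 1).pow (j+1)
      simp only [Nat.add_sub_cancel, id_eq, Pi.pow_def] at h
      refine h.congr_deriv ?_
      push_cast
      ring
    have hv : ∀ x ∈ Set.uIcc (-1:ℝ) 1, HasDerivAt (fun x : ℝ => (x+1)^(k+1)/((k:ℝ)+1))
        ((x+1)^k) x := by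
      intro x _
      have h := (((hasDerivAt_id x).add_const 1).pow (k+1)).div_const ((k:ℝ)+1)
      simp only [Nat.add_sub_cancel, id_eq, Pi.pow_def] at h
      refine h.congr_deriv ?_
      have hk : ((k:ℝ)+1) ≠ 0 := by positivity
      push_cast
      field_simp
    have hiu : IntervalIntegrable (fun x : ℝ => -((j:ℝ)+1) * (1-x)^j) MeasureTheory.volume (-1) 1 :=
      (Continuous.intervalIntegrable (by fun_prop) _ _)
    have hiv : IntervalIntegrable (fun x : ℝ => (x+1)^k) MeasureTheory.volume (-1) 1 :=
      (Continuous.intervalIntegrable (by fun_prop) _ _)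
    have key := intervalIntegral.integral_mul_deriv_eq_deriv_mul hu hv hiu hiv
    rw [key]
    have hre : (fun x : ℝ => -((j:ℝ)+1) * (1-x)^j * ((x+1)^(k+1)/((k:ℝ)+1)))
        = fun x : ℝ => (-((j:ℝ)+1)/((k:ℝ)+1)) * ((1-x)^j * (x+1)^(k+1)) := by
      funext x; ring
    rw [show (∫ x in (-1:ℝ)..1, -((j:ℝ)+1) * (1-x)^j * ((x+1)^(k+1)/((k:ℝ)+1)))
        = ∫ x in (-1:ℝ)..1, (-((j:ℝ)+1)/((k:ℝ)+1)) * ((1-x)^j * (x+1)^(k+1)) from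
      intervalIntegral.integral_congr (fun x _ => by ring),
      intervalIntegral.integral_const_mul, ih (k+1)]
    rw [show j + (k+1) + 1 = j + k + 2 from by omega, show j + 1 + k + 1 = j + k + 2 from by omega]
    simp only [Nat.factorial_succ]
    have h1 : ((k:ℝ)+1) ≠ 0 := by positivity
    have h2 : ((j+k+1).factorial : ℝ) ≠ 0 := by positivity
    have h3 : (((j+k+1 : ℕ):ℝ)+1) ≠ 0 := by positivity
    push_cast
    norm_num
    field_simp
    ring

theorem markov_lorentz_derivative (d : ℕ) (hd : 0 < d)
    (f : Polynomial ℝ) (hdeg : f.natDegree ≤ d)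
    (A : ℕ → ℝ) (hA : ∀ j ≤ d - 1, 0 ≤ A j)
    (hf' : ∀ x : ℝ, f.derivative.eval x =
      ∑ j ∈ range d, A j * (1 - x) ^ j * (x + 1) ^ (d - 1 - j)) :
    (⨆ x : Set.Icc (-1 : ℝ) 1, |f.derivative.eval (x : ℝ)|) ≤
        ((d : ℝ) / 2) * (f.eval 1 - f.eval (-1)) ∧
      ((d : ℝ) / 2) * (f.eval 1 - f.eval (-1)) ≤
        (d : ℝ) * ⨆ x : Set.Icc (-1 : ℝ) 1, |f.eval (x : ℝ)| := by
  obtain ⟨k, rfl⟩ : ∃ k, d = k + 1 := ⟨d - 1, (Nat.succ_pred_eq_of_pos hd).symm⟩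
  simp only [Nat.add_sub_cancel] at hA hf'
  haveI : Nonempty (Set.Icc (-1:ℝ) 1) := ⟨⟨0, by norm_num⟩⟩
  simp only [mul_assoc] at hf'
  set S : ℝ := ∑ j ∈ range (k+1),
      A j * (2^k * ((j.factorial : ℝ) * ((k-j).factorial : ℝ)) / (k.factorial : ℝ)) with hS
  -- Step A : f(1) - f(-1) = (2/(k+1)) * S
  have hft : f.eval 1 - f.eval (-1) = 2/((k:ℝ)+1) * S := by
    have h1 : (∫ x in (-1:ℝ)..1, f.derivative.eval x) = f.eval 1 - f.eval (-1) :=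
      intervalIntegral.integral_eq_sub_of_hasDerivAt (fun x _ => f.hasDerivAt x)
        (f.derivative.continuous.intervalIntegrable _ _)
    rw [← h1, intervalIntegral.integral_congr (g := fun x => ∑ j ∈ range (k+1),
        A j * ((1-x)^j * (x+1)^(k-j))) (fun x _ => hf' x),
      intervalIntegral.integral_finset_sum
        (fun j _ => Continuous.intervalIntegrable (by fun_prop) _ _)]
    simp only [intervalIntegral.integral_const_mul, beta_int]
    rw [hS, Finset.mul_sum]
    apply Finset.sum_congr rfl
    intro j hj
    have hjk : j ≤ k := by simpa using Nat.lt_succ_iff.mp (mem_range.mp hj)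
    rw [Nat.add_sub_cancel' hjk, Nat.factorial_succ]
    have h1 : ((k:ℝ)+1) ≠ 0 := by positivity
    have h2 : ((k.factorial : ℝ)) ≠ 0 := by positivity
    push_cast
    field_simp
    ring
  -- Step B : pointwise bound on the basis polynomials
  have hB : ∀ j ≤ k, ∀ x ∈ Set.Icc (-1:ℝ) 1,
      (1-x)^j * (x+1)^(k-j) ≤ 2^k * ((j.factorial : ℝ) * ((k-j).factorial : ℝ)) / (k.factorial : ℝ) := by
    intro j hj x hx
    have h1 : 0 ≤ 1 - x := by linarith [hx.2]
    have h2 : 0 ≤ x + 1 := by linarith [hx.1]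
    have hsum : ∑ i ∈ range (k+1), (1-x)^i * (x+1)^(k-i) * (k.choose i : ℝ) = 2^k := by
      rw [← add_pow]; ring_nf
    have hterm : (1-x)^j * (x+1)^(k-j) * (k.choose j : ℝ) ≤ 2^k := by
      rw [← hsum]
      exact Finset.single_le_sum (f := fun i => (1-x)^i * (x+1)^(k-i) * (k.choose i : ℝ))
        (fun i _ => by positivity) (mem_range.mpr (Nat.lt_succ_of_le hj))
    have hk : (0:ℝ) < (k.factorial : ℝ) := by positivity
    have hF : (0:ℝ) < (j.factorial : ℝ) * ((k-j).factorial : ℝ) := by positivity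
    have hfact : (k.choose j : ℝ) * ((j.factorial : ℝ) * ((k-j).factorial : ℝ)) = (k.factorial : ℝ) := by
      rw [← mul_assoc]
      exact_mod_cast congrArg (Nat.cast : ℕ → ℝ) (Nat.choose_mul_factorial_mul_factorial hj)
    rw [le_div_iff₀ hk, ← hfact]
    nlinarith [hterm, hF]
  -- Step C : 0 ≤ f' ≤ S on [-1,1]
  have hC : ∀ x : ℝ, x ∈ Set.Icc (-1:ℝ) 1 →
      0 ≤ f.derivative.eval x ∧ f.derivative.eval x ≤ S := by
    intro x hx
    have h1 : 0 ≤ 1 - x := by linarith [hx.2]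
    have h2 : 0 ≤ x + 1 := by linarith [hx.1]
    rw [hf' x]
    constructor
    · apply Finset.sum_nonneg
      intro j hj
      have hjk : j ≤ k := Nat.lt_succ_iff.mp (mem_range.mp hj)
      have := hA j hjk
      positivity
    · apply Finset.sum_le_sum
      intro j hj
      have hjk : j ≤ k := Nat.lt_succ_iff.mp (mem_range.mp hj)
      exact mul_le_mul_of_nonneg_left (hB j hjk x hx) (hA j hjk)
  have hRHS : ((k+1:ℕ):ℝ)/2 * (f.eval 1 - f.eval (-1)) = S := by
    rw [hft]
    have h1 : ((k:ℝ)+1) ≠ 0 := by positivity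
    push_cast
    field_simp
  constructor
  · rw [hRHS]
    apply ciSup_le
    intro x
    rw [abs_of_nonneg (hC x x.2).1]
    exact (hC x x.2).2
  · have hM : BddAbove (Set.range fun x : Set.Icc (-1:ℝ) 1 => |f.eval (x:ℝ)|) := by
      rw [show (fun x : Set.Icc (-1:ℝ) 1 => |f.eval (x:ℝ)|)
          = (fun x : ℝ => |f.eval x|) ∘ Subtype.val from rfl,
        Set.range_comp, Subtype.range_coe]
      exact (isCompact_Icc.image (by fun_prop)).bddAbove
    have h1 : f.eval 1 ≤ ⨆ x : Set.Icc (-1:ℝ) 1, |f.eval (x:ℝ)| :=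
      le_trans (le_abs_self _) (le_ciSup hM ⟨1, by norm_num⟩)
    have h2 : -f.eval (-1) ≤ ⨆ x : Set.Icc (-1:ℝ) 1, |f.eval (x:ℝ)| :=
      le_trans (neg_le_abs _) (le_ciSup hM ⟨-1, by norm_num⟩)
    have h3 : f.eval 1 - f.eval (-1) ≤ 2 * ⨆ x : Set.Icc (-1:ℝ) 1, |f.eval (x:ℝ)| := by
      linarith
    calc ((k+1:ℕ):ℝ)/2 * (f.eval 1 - f.eval (-1))
        ≤ ((k+1:ℕ):ℝ)/2 * (2 * ⨆ x : Set.Icc (-1:ℝ) 1, |f.eval (x:ℝ)|) :=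
          mul_le_mul_of_nonneg_left h3 (by positivity)
      _ = ((k+1:ℕ):ℝ) * ⨆ x : Set.Icc (-1:ℝ) 1, |f.eval (x:ℝ)| := by ring
end

section
/- Let n be a positive integer and let f be a real polynomial of degree at most n such that f' has no zeros in the open unit disk of ℂ. Then max_{x ∈ [-1,1]} |f'(x)| ≤ n · max_{x ∈ [-1,1]} |f(x)|. -/
open Polynomial

private lemma markov_sq_ineq (a b x t : ℝ) (hx : -1 ≤ x) (hxt : x ≤ t) (ht : t ≤ 1)
    (hz : 1 ≤ a^2 + b^2) :
    ((x-a)^2 + b^2) * (1-t)^2 ≤ ((t-a)^2 + b^2) * (1-x)^2 := by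
  have hu : (0:ℝ) ≤ 1 - t := by linarith
  have hv : (0:ℝ) ≤ 1 - x := by linarith
  have huv : (0:ℝ) ≤ (1-x) - (1-t) := by linarith
  rcases le_or_gt a 1 with ha | ha
  · have hxt1 : x * t ≤ 1 := by nlinarith
    nlinarith [mul_nonneg huv (mul_nonneg (by linarith : (0:ℝ) ≤ a^2+b^2-1) (by linarith : (0:ℝ) ≤ (1-x)+(1-t))),
      mul_nonneg huv (mul_nonneg (by linarith : (0:ℝ) ≤ 2*(1-a)) (by linarith : (0:ℝ) ≤ 1 - x*t))]
  · nlinarith [mul_nonneg huv (mul_nonneg (by positivity : (0:ℝ) ≤ (1-a)^2+b^2) (by linarith : (0:ℝ) ≤ (1-x)+(1-t))),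
      mul_nonneg huv (mul_nonneg (mul_nonneg (by linarith : (0:ℝ) ≤ 2*(a-1)) hv) hu)]

private lemma markov_abs_ineq (z : ℂ) (x t : ℝ) (hx : -1 ≤ x) (hxt : x ≤ t) (ht : t ≤ 1)
    (hz : 1 ≤ ‖z‖) :
    ‖(x:ℂ) - z‖ * (1 - t) ≤ ‖(t:ℂ) - z‖ * (1 - x) := by
  have h1 : (0:ℝ) ≤ 1 - t := by linarith
  have h2 : (0:ℝ) ≤ 1 - x := by linarith
  have key := markov_sq_ineq z.re z.im x t hx hxt ht (by
    have := Complex.sq_norm z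
    nlinarith [Complex.normSq_apply z, norm_nonneg z])
  have e1 : ‖(x:ℂ) - z‖ ^ 2 = (x - z.re)^2 + z.im^2 := by
    rw [Complex.sq_norm, Complex.normSq_apply]; simp; ring
  have e2 : ‖(t:ℂ) - z‖ ^ 2 = (t - z.re)^2 + z.im^2 := by
    rw [Complex.sq_norm, Complex.normSq_apply]; simp; ring
  rw [← pow_le_pow_iff_left₀ (by positivity) (by positivity) (two_ne_zero)]
  rw [mul_pow, mul_pow, e1, e2]
  exact key

private lemma markov_ratio_lemma (g : Polynomial ℝ)
    (hroots : ∀ z : ℂ, aeval z g = 0 → 1 ≤ ‖z‖)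
    (x t : ℝ) (hx : -1 ≤ x) (hxt : x ≤ t) (ht : t ≤ 1) :
    |g.eval x| * (1-t)^g.natDegree ≤ |g.eval t| * (1-x)^g.natDegree := by
  rcases eq_or_ne g 0 with rfl | hg
  · simp
  set G := g.map (algebraMap ℝ ℂ) with hGdef
  have hsplit : G.Splits := IsAlgClosed.splits G
  have hcard : G.roots.card = g.natDegree := by
    rw [← Polynomial.natDegree_map (algebraMap ℝ ℂ) (p := g)]
    exact (Polynomial.splits_iff_card_roots.mp hsplit)
  have hfact : G = C G.leadingCoeff * (G.roots.map fun z => X - C z).prod :=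
    hsplit.eq_prod_roots
  have heval : ∀ y : ℝ, G.eval (y:ℂ) = ((g.eval y : ℝ) : ℂ) := by
    intro y
    rw [hGdef, Polynomial.eval_map, ← Polynomial.aeval_def, ← Complex.coe_algebraMap,
      Polynomial.aeval_algebraMap_apply_eq_algebraMap_eval]
  have habs : ∀ y : ℝ, |g.eval y| =
      ‖G.leadingCoeff‖ * ((G.roots.map fun z => ‖(y:ℂ) - z‖).prod) := by
    intro y
    rw [← Real.norm_eq_abs, ← Complex.norm_real, ← heval y]
    conv_lhs => rw [hfact]
    rw [Polynomial.eval_mul, norm_mul, Polynomial.eval_multiset_prod,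
      (fun s : Multiset ℂ => (by exact map_multiset_prod (normHom : ℂ →*₀ ℝ) s : ‖s.prod‖ = (s.map (‖·‖)).prod)),
      Multiset.map_map, Multiset.map_map]
    simp
  have hzroots : ∀ z ∈ G.roots, 1 ≤ ‖z‖ := by
    intro z hz
    apply hroots
    have := Polynomial.isRoot_of_mem_roots hz
    rwa [Polynomial.IsRoot, hGdef, Polynomial.eval_map, ← Polynomial.aeval_def] at this
  have hpow : ∀ c : ℝ, (c)^g.natDegree = (G.roots.map fun _ => c).prod := by
    intro c
    rw [Multiset.map_const', Multiset.prod_replicate, hcard]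
  rw [habs x, habs t, hpow, hpow, mul_assoc, mul_assoc,
    ← Multiset.prod_map_mul, ← Multiset.prod_map_mul]
  apply mul_le_mul_of_nonneg_left _ (norm_nonneg _)
  apply Multiset.prod_map_le_prod_map₀
  · intro z hz
    exact mul_nonneg (norm_nonneg _) (by linarith)
  · intro z hz
    exact markov_abs_ineq z x t hx hxt ht (hzroots z hz)

private lemma markov_right_bound (n : ℕ) (f : Polynomial ℝ)
    (hmn : f.derivative.natDegree + 1 ≤ n)
    (hroots : ∀ z : ℂ, aeval z f.derivative = 0 → 1 ≤ ‖z‖)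
    (hpos : ∀ y ∈ Set.Icc (-1:ℝ) 1, 0 ≤ f.derivative.eval y)
    (x : ℝ) (hx : x ∈ Set.Ioo (-1:ℝ) 1) :
    f.derivative.eval x * (1-x) ≤ n * (f.eval 1 - f.eval x) := by
  obtain ⟨hx1, hx2⟩ := hx
  set g := f.derivative with hgdef
  set m := g.natDegree with hmdef
  have hgx : 0 ≤ g.eval x := hpos x ⟨hx1.le, hx2.le⟩
  have h1x : (0:ℝ) < 1 - x := by linarith
  set K : ℝ := g.eval x / ((1-x)^m * (m+1)) with hKdef
  have hK : 0 ≤ K := by positivity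
  set φ : ℝ → ℝ := fun t => (f.eval 1 - f.eval t) - K * (1-t)^(m+1) with hφdef
  have hd : ∀ t : ℝ, HasDerivAt φ (-(g.eval t) - K * ((↑(m+1)) * (1-t)^m * (-1))) t := by
    intro t
    have hd1 : HasDerivAt (fun t : ℝ => f.eval t) (g.eval t) t := f.hasDerivAt t
    have hbase : HasDerivAt (fun t : ℝ => 1 - t) (-1) t := by
      simpa using (hasDerivAt_id t).const_sub 1
    have hd2 : HasDerivAt (fun t : ℝ => (1-t)^(m+1)) ((↑(m+1)) * (1-t)^m * (-1)) t := by
      simpa using hbase.fun_pow (m+1)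
    have := ((hasDerivAt_const t (f.eval 1)).fun_sub hd1).fun_sub (hd2.const_mul K)
    simpa [hφdef, zero_sub, mul_comm] using this
  have hmono : AntitoneOn φ (Set.Icc x 1) := by
    have hdiff : Differentiable ℝ φ := fun t => (hd t).differentiableAt
    apply antitoneOn_of_deriv_nonpos (convex_Icc x 1) hdiff.continuous.continuousOn
      (fun t _ => (hd t).differentiableAt.differentiableWithinAt)
    · intro t ht
      rw [interior_Icc] at ht
      rw [(hd t).deriv]
      have htI : t ∈ Set.Icc (-1:ℝ) 1 := ⟨by linarith [ht.1], ht.2.le⟩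
      have hgt : 0 ≤ g.eval t := hpos t htI
      have hr := markov_ratio_lemma g hroots x t hx1.le ht.1.le ht.2.le
      rw [abs_of_nonneg hgx, abs_of_nonneg hgt, ← hmdef] at hr
      have hKm : K * ((↑(m+1)) * (1-t)^m) ≤ g.eval t := by
        rw [hKdef]
        rw [div_mul_eq_mul_div, div_le_iff₀ (by positivity)]
        push_cast
        nlinarith [pow_nonneg (by linarith [ht.2] : (0:ℝ) ≤ 1 - t) m]
      nlinarith
  have hφ1 : φ 1 = 0 := by simp [hφdef]
  have hφx : 0 ≤ φ x := by
    rw [← hφ1]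
    exact hmono (Set.left_mem_Icc.mpr hx2.le) (Set.right_mem_Icc.mpr hx2.le) hx2.le
  have hKx : K * (1-x)^(m+1) = g.eval x * (1-x) / (m+1) := by
    rw [hKdef]
    field_simp
    ring
  have key : g.eval x * (1-x) ≤ (m+1) * (f.eval 1 - f.eval x) := by
    rw [hφdef] at hφx
    simp only at hφx
    rw [hKx] at hφx
    rw [sub_nonneg, div_le_iff₀ (by positivity : (0:ℝ) < (m:ℝ)+1)] at hφx
    linarith [hφx]
  have hnn : 0 ≤ f.eval 1 - f.eval x := by nlinarith [mul_nonneg hgx h1x.le]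
  calc g.eval x * (1-x) ≤ (m+1) * (f.eval 1 - f.eval x) := key
    _ ≤ n * (f.eval 1 - f.eval x) := by
        apply mul_le_mul_of_nonneg_right _ hnn
        exact_mod_cast hmn

private lemma markov_pos_case (n : ℕ) (f : Polynomial ℝ)
    (hmn : f.derivative.natDegree + 1 ≤ n)
    (hroots : ∀ z : ℂ, aeval z f.derivative = 0 → 1 ≤ ‖z‖)
    (hpos : ∀ y ∈ Set.Icc (-1:ℝ) 1, 0 ≤ f.derivative.eval y)
    (x : ℝ) (hx : x ∈ Set.Icc (-1:ℝ) 1) :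
    2 * f.derivative.eval x ≤ n * (f.eval 1 - f.eval (-1)) := by
  set g := f.derivative with hgdef
  set h : Polynomial ℝ := -(f.comp (-X)) with hhdef
  have hhd : h.derivative = g.comp (-X) := by
    rw [hhdef, derivative_neg, derivative_comp]
    simp [hgdef]
  have hdeg : h.derivative.natDegree + 1 ≤ n := by
    rw [hhd]
    rcases eq_or_ne g 0 with hg | hg
    · rw [hg]; simpa [hg] using hmn
    · rw [natDegree_comp]
      simpa using hmn
  have hroots' : ∀ z : ℂ, aeval z h.derivative = 0 → 1 ≤ ‖z‖ := by
    intro z hz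
    rw [hhd, aeval_comp] at hz
    have : aeval (-z) g = 0 := by simpa using hz
    simpa using hroots (-z) this
  have hpos' : ∀ y ∈ Set.Icc (-1:ℝ) 1, 0 ≤ h.derivative.eval y := by
    intro y hy
    rw [hhd, eval_comp]
    simp only [eval_neg, eval_X]
    exact hpos (-y) ⟨by linarith [hy.2], by linarith [hy.1]⟩
  have main : ∀ y ∈ Set.Ioo (-1:ℝ) 1, 2 * g.eval y ≤ n * (f.eval 1 - f.eval (-1)) := by
    intro y hy
    have hr := markov_right_bound n f hmn hroots hpos y hy
    have hl := markov_right_bound n h hdeg hroots' hpos' (-y) ⟨by linarith [hy.2], by linarith [hy.1]⟩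
    rw [hhd] at hl
    have e1 : (g.comp (-X)).eval (-y) = g.eval y := by simp [eval_comp]
    have e2 : h.eval 1 = -(f.eval (-1)) := by simp [hhdef, eval_comp]
    have e3 : h.eval (-y) = -(f.eval y) := by simp [hhdef, eval_comp]
    rw [e1, e2, e3] at hl
    linarith
  have hclosed : IsClosed {y : ℝ | 2 * g.eval y ≤ n * (f.eval 1 - f.eval (-1))} :=
    isClosed_le (by exact (continuous_const.mul g.continuous)) continuous_const
  have hsub : Set.Icc (-1:ℝ) 1 ⊆ {y : ℝ | 2 * g.eval y ≤ n * (f.eval 1 - f.eval (-1))} := by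
    rw [← closure_Ioo (by norm_num : (-1:ℝ) ≠ 1)]
    exact closure_minimal main hclosed
  exact hsub hx

private lemma markov_sign_const (g : Polynomial ℝ)
    (hnr : ∀ y ∈ Set.Ioo (-1:ℝ) 1, g.eval y ≠ 0) :
    (∀ y ∈ Set.Ioo (-1:ℝ) 1, 0 < g.eval y) ∨ (∀ y ∈ Set.Ioo (-1:ℝ) 1, g.eval y < 0) := by
  have ivt : ∀ a b : ℝ, a ∈ Set.Ioo (-1:ℝ) 1 → b ∈ Set.Ioo (-1:ℝ) 1 →
      g.eval a < 0 → 0 < g.eval b → False := by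
    intro a b ha hb hga hgb
    rcases lt_trichotomy a b with hab | hab | hab
    · obtain ⟨c, hc, hc0⟩ := intermediate_value_Ioo hab.le
        (g.continuous.continuousOn (s := Set.Icc a b)) (Set.mem_Ioo.mpr ⟨hga, hgb⟩)
      exact hnr c ⟨lt_trans ha.1 hc.1, lt_trans hc.2 hb.2⟩ hc0
    · rw [hab] at hga; linarith
    · obtain ⟨c, hc, hc0⟩ := intermediate_value_Ioo' hab.le
        (g.continuous.continuousOn (s := Set.Icc b a)) (Set.mem_Ioo.mpr ⟨hga, hgb⟩)
      exact hnr c ⟨lt_trans hb.1 hc.1, lt_trans hc.2 ha.2⟩ hc0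
  have h0 : (0:ℝ) ∈ Set.Ioo (-1:ℝ) 1 := by norm_num
  rcases lt_or_gt_of_ne (hnr 0 h0) with hneg | hposi
  · right
    intro y hy
    rcases lt_or_gt_of_ne (hnr y hy) with h | h
    · exact h
    · exact absurd (ivt 0 y h0 hy hneg h) not_false
  · left
    intro y hy
    rcases lt_or_gt_of_ne (hnr y hy) with h | h
    · exact absurd (ivt y 0 hy h0 h hposi) not_false
    · exact h

private lemma markov_half (n : ℕ) (f : Polynomial ℝ)
    (hmn : f.derivative.natDegree + 1 ≤ n)
    (hroots : ∀ z : ℂ, aeval z f.derivative = 0 → 1 ≤ ‖z‖)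
    (hposo : ∀ y ∈ Set.Ioo (-1:ℝ) 1, 0 < f.derivative.eval y)
    (M : ℝ) (hM : ∀ y ∈ Set.Icc (-1:ℝ) 1, |f.eval y| ≤ M) :
    ∀ x ∈ Set.Icc (-1:ℝ) 1, |f.derivative.eval x| ≤ n * M := by
  set g := f.derivative with hgdef
  have hpos : ∀ y ∈ Set.Icc (-1:ℝ) 1, 0 ≤ g.eval y := by
    have hclosed : IsClosed {y : ℝ | 0 ≤ g.eval y} :=
      isClosed_le continuous_const g.continuous
    have hsub : Set.Icc (-1:ℝ) 1 ⊆ {y : ℝ | 0 ≤ g.eval y} := by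
      rw [← closure_Ioo (by norm_num : (-1:ℝ) ≠ 1)]
      exact closure_minimal (fun y hy => (hposo y hy).le) hclosed
    exact fun y hy => hsub hy
  intro x hx
  have key := markov_pos_case n f hmn hroots hpos x hx
  rw [abs_of_nonneg (hpos x hx)]
  have h1 : f.eval 1 ≤ M := (abs_le.mp (hM 1 (by norm_num))).2
  have h2 : -M ≤ f.eval (-1) := (abs_le.mp (hM (-1) (by norm_num))).1
  nlinarith

theorem markov_derivative_no_zeros (n : ℕ) (hn : 0 < n)
    (f : Polynomial ℝ) (hdeg : f.natDegree ≤ n)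
    (hroots : ∀ z : ℂ, Polynomial.aeval z f.derivative = 0 → 1 ≤ ‖z‖) :
    (⨆ x : Set.Icc (-1 : ℝ) 1, |f.derivative.eval (x : ℝ)|) ≤
      (n : ℝ) * ⨆ x : Set.Icc (-1 : ℝ) 1, |f.eval (x : ℝ)| := by
  haveI : Nonempty (Set.Icc (-1 : ℝ) 1) := Set.nonempty_Icc_subtype (by norm_num)
  set M : ℝ := ⨆ x : Set.Icc (-1 : ℝ) 1, |f.eval (x : ℝ)| with hMdef
  have hbdd : BddAbove (Set.range fun x : Set.Icc (-1:ℝ) 1 => |f.eval (x:ℝ)|) := by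
    have : Set.range (fun x : Set.Icc (-1:ℝ) 1 => |f.eval (x:ℝ)|) =
        (fun y => |f.eval y|) '' Set.Icc (-1:ℝ) 1 := by
      ext w; simp [Set.mem_image]
    rw [this]
    exact (isCompact_Icc.image (by exact f.continuous.abs)).bddAbove
  have hM : ∀ y ∈ Set.Icc (-1:ℝ) 1, |f.eval y| ≤ M :=
    fun y hy => le_ciSup hbdd (⟨y, hy⟩ : Set.Icc (-1:ℝ) 1)
  have hM0 : 0 ≤ M := le_trans (abs_nonneg _) (hM 1 (by norm_num))
  apply ciSup_le
  intro x
  rcases eq_or_ne f.derivative 0 with hg0 | hg0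
  · rw [hg0]
    simp only [eval_zero, abs_zero]
    positivity
  have hfd : f.natDegree ≠ 0 := by
    intro h
    obtain ⟨a, rfl⟩ := Polynomial.natDegree_eq_zero.mp h
    simp at hg0
  have hmn : f.derivative.natDegree + 1 ≤ n := by
    have := Polynomial.natDegree_derivative_lt hfd
    omega
  have hnr : ∀ y ∈ Set.Ioo (-1:ℝ) 1, f.derivative.eval y ≠ 0 := by
    intro y hy he
    have : aeval (y:ℂ) f.derivative = 0 := by
      rw [show ((y:ℝ):ℂ) = algebraMap ℝ ℂ y from rfl,
        Polynomial.aeval_algebraMap_apply_eq_algebraMap_eval]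
      simp [he]
    have h1 := hroots _ this
    rw [Complex.norm_real, Real.norm_eq_abs] at h1
    rcases hy with ⟨hy1, hy2⟩
    have h2 : |y| < 1 := abs_lt.mpr ⟨hy1, hy2⟩
    linarith
  rcases markov_sign_const f.derivative hnr with hsign | hsign
  · exact markov_half n f hmn hroots hsign M hM x x.2
  · have hd' : (-f).derivative = -(f.derivative) := derivative_neg f
    have hmn' : (-f).derivative.natDegree + 1 ≤ n := by
      rw [hd', natDegree_neg]; exact hmn
    have hroots' : ∀ z : ℂ, aeval z (-f).derivative = 0 → 1 ≤ ‖z‖ := by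
      intro z hz
      apply hroots
      rw [hd', map_neg, neg_eq_zero] at hz
      exact hz
    have hposo' : ∀ y ∈ Set.Ioo (-1:ℝ) 1, 0 < (-f).derivative.eval y := by
      intro y hy
      rw [hd', eval_neg]
      linarith [hsign y hy]
    have hM' : ∀ y ∈ Set.Icc (-1:ℝ) 1, |(-f).eval y| ≤ M := by
      intro y hy
      rw [eval_neg, abs_neg]
      exact hM y hy
    have := markov_half n (-f) hmn' hroots' hposo' M hM' x x.2
    rwa [hd', eval_neg, abs_neg] at this
end

section
/- Let n be a positive integer and let f be a real polynomial of degree at most n that is monotone on [-1,1] and whose complex zeros are all real and lie in ℝ \ (-1,1). Then max_{x ∈ [-1,1]} |f'(x)| ≤ (n/2) · max_{x ∈ [-1,1]} |f(x)|. -/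
open Polynomial

namespace MarkovAux

noncomputable def phi (ρ x : ℝ) : ℝ := if 1 ≤ ρ then ρ - x else x - ρ

lemma rho_cases {ρ : ℝ} (h : 1 ≤ |ρ|) : 1 ≤ ρ ∨ ρ ≤ -1 := by
  rcases le_abs.mp h with h1 | h1
  · left; exact h1
  · right; linarith

lemma phi_nonneg {ρ x : ℝ} (hρ : 1 ≤ |ρ|) (hx1 : -1 ≤ x) (hx2 : x ≤ 1) : 0 ≤ phi ρ x := by
  unfold phi
  rcases rho_cases hρ with h | h
  · rw [if_pos h]; linarith
  · rw [if_neg (by linarith)]; linarith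

lemma phi_pos {ρ x : ℝ} (hρ : 1 ≤ |ρ|) (hx1 : -1 < x) (hx2 : x < 1) : 0 < phi ρ x := by
  unfold phi
  rcases rho_cases hρ with h | h
  · rw [if_pos h]; linarith
  · rw [if_neg (by linarith)]; linarith

lemma phi_right {ρ x y : ℝ} (hρ : 1 ≤ |ρ|) (hx : -1 ≤ x) (hxy : x ≤ y) (hy : y ≤ 1) :
    (1 - y) * phi ρ x ≤ (1 - x) * phi ρ y := by
  rcases rho_cases hρ with h | h
  · simp only [phi, if_pos h]; nlinarith
  · simp only [phi, if_neg (show ¬ (1:ℝ) ≤ ρ by linarith)]; nlinarith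

lemma phi_left {ρ x y : ℝ} (hρ : 1 ≤ |ρ|) (hx : -1 ≤ x) (hxy : x ≤ y) (hy : y ≤ 1) :
    (1 + x) * phi ρ y ≤ (1 + y) * phi ρ x := by
  rcases rho_cases hρ with h | h
  · simp only [phi, if_pos h]; nlinarith
  · simp only [phi, if_neg (show ¬ (1:ℝ) ≤ ρ by linarith)]; nlinarith

noncomputable def pprod (R : Multiset ℝ) (x : ℝ) : ℝ := (R.map fun ρ => phi ρ x).prod

lemma pprod_nonneg {R : Multiset ℝ} (hR : ∀ ρ ∈ R, 1 ≤ |ρ|) {x : ℝ}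
    (hx1 : -1 ≤ x) (hx2 : x ≤ 1) : 0 ≤ pprod R x := by
  induction R using Multiset.induction_on with
  | empty => simp [pprod]
  | cons ρ R ih =>
    rw [pprod, Multiset.map_cons, Multiset.prod_cons]
    have h1 := phi_nonneg (hR ρ (Multiset.mem_cons_self ρ R)) hx1 hx2
    have h2 : 0 ≤ pprod R x := ih (fun r hr => hR r (Multiset.mem_cons_of_mem hr))
    exact mul_nonneg h1 h2

lemma pprod_pos {R : Multiset ℝ} (hR : ∀ ρ ∈ R, 1 ≤ |ρ|) {x : ℝ}
    (hx1 : -1 < x) (hx2 : x < 1) : 0 < pprod R x := by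
  induction R using Multiset.induction_on with
  | empty => simp [pprod]
  | cons ρ R ih =>
    rw [pprod, Multiset.map_cons, Multiset.prod_cons]
    have h1 := phi_pos (hR ρ (Multiset.mem_cons_self ρ R)) hx1 hx2
    have h2 : 0 < pprod R x := ih (fun r hr => hR r (Multiset.mem_cons_of_mem hr))
    exact mul_pos h1 h2

lemma pprod_right {R : Multiset ℝ} (hR : ∀ ρ ∈ R, 1 ≤ |ρ|) {x y : ℝ}
    (hx : -1 ≤ x) (hxy : x ≤ y) (hy : y ≤ 1) :
    (1 - y) ^ Multiset.card R * pprod R x ≤ (1 - x) ^ Multiset.card R * pprod R y := by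
  induction R using Multiset.induction_on with
  | empty => simp [pprod]
  | cons ρ R ih =>
    have hmemρ := hR ρ (Multiset.mem_cons_self ρ R)
    have hRrest : ∀ r ∈ R, 1 ≤ |r| := fun r hr => hR r (Multiset.mem_cons_of_mem hr)
    simp only [pprod, Multiset.map_cons, Multiset.prod_cons, Multiset.card_cons, pow_succ]
    have h1 := phi_right hmemρ hx hxy hy
    have h2 := ih hRrest
    simp only [pprod] at h2
    have hb : 0 ≤ (1 - x) * phi ρ y := mul_nonneg (by linarith) (phi_nonneg hmemρ (by linarith) hy)
    have hc : 0 ≤ (1 - y) ^ Multiset.card R * (Multiset.map (fun ρ => phi ρ x) R).prod := by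
      have := pprod_nonneg hRrest hx (le_trans hxy hy)
      simp only [pprod] at this
      exact mul_nonneg (pow_nonneg (by linarith) _) this
    calc (1 - y) ^ Multiset.card R * (1 - y) * (phi ρ x * (Multiset.map (fun ρ => phi ρ x) R).prod)
        = ((1 - y) * phi ρ x) * ((1 - y) ^ Multiset.card R * (Multiset.map (fun ρ => phi ρ x) R).prod) := by
          ring
      _ ≤ ((1 - x) * phi ρ y) * ((1 - x) ^ Multiset.card R * (Multiset.map (fun ρ => phi ρ y) R).prod) :=
          mul_le_mul h1 h2 hc hb
      _ = (1 - x) ^ Multiset.card R * (1 - x) * (phi ρ y * (Multiset.map (fun ρ => phi ρ y) R).prod) := by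
          ring

lemma pprod_left {R : Multiset ℝ} (hR : ∀ ρ ∈ R, 1 ≤ |ρ|) {x y : ℝ}
    (hx : -1 ≤ x) (hxy : x ≤ y) (hy : y ≤ 1) :
    (1 + x) ^ Multiset.card R * pprod R y ≤ (1 + y) ^ Multiset.card R * pprod R x := by
  induction R using Multiset.induction_on with
  | empty => simp [pprod]
  | cons ρ R ih =>
    have hmemρ := hR ρ (Multiset.mem_cons_self ρ R)
    have hRrest : ∀ r ∈ R, 1 ≤ |r| := fun r hr => hR r (Multiset.mem_cons_of_mem hr)
    simp only [pprod, Multiset.map_cons, Multiset.prod_cons, Multiset.card_cons, pow_succ]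
    have h1 := phi_left hmemρ hx hxy hy
    have h2 := ih hRrest
    simp only [pprod] at h2
    have hb : 0 ≤ (1 + y) * phi ρ x := mul_nonneg (by linarith) (phi_nonneg hmemρ hx (by linarith))
    have hc : 0 ≤ (1 + x) ^ Multiset.card R * (Multiset.map (fun ρ => phi ρ y) R).prod := by
      have := pprod_nonneg hRrest (le_trans hx hxy) hy
      simp only [pprod] at this
      exact mul_nonneg (pow_nonneg (by linarith) _) this
    calc (1 + x) ^ Multiset.card R * (1 + x) * (phi ρ y * (Multiset.map (fun ρ => phi ρ y) R).prod)
        = ((1 + x) * phi ρ y) * ((1 + x) ^ Multiset.card R * (Multiset.map (fun ρ => phi ρ y) R).prod) := by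
          ring
      _ ≤ ((1 + y) * phi ρ x) * ((1 + y) ^ Multiset.card R * (Multiset.map (fun ρ => phi ρ x) R).prod) :=
          mul_le_mul h1 h2 hc hb
      _ = (1 + y) ^ Multiset.card R * (1 + y) * (phi ρ x * (Multiset.map (fun ρ => phi ρ x) R).prod) := by
          ring

lemma exists_repr (R : Multiset ℝ) (c : ℝ) :
    ∃ K : ℝ, ∀ x : ℝ, eval x (C c * (R.map fun r => X - C r).prod) = K * pprod R x := by
  induction R using Multiset.induction_on with
  | empty => exact ⟨c, fun x => by simp [pprod]⟩
  | cons ρ R ih =>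
    obtain ⟨K, hK⟩ := ih
    refine ⟨if 1 ≤ ρ then -K else K, fun x => ?_⟩
    have : eval x (C c * ((Multiset.map (fun r => X - C r) (ρ ::ₘ R)).prod))
        = (x - ρ) * eval x (C c * (Multiset.map (fun r => X - C r) R).prod) := by
      rw [Multiset.map_cons, Multiset.prod_cons]
      simp [eval_mul]
      ring
    rw [this, hK]
    simp only [pprod, Multiset.map_cons, Multiset.prod_cons, phi]
    by_cases h : 1 ≤ ρ
    · simp only [if_pos h]; ring
    · simp only [if_neg h]; ring

lemma eval_deriv_prod (R : Multiset ℝ) (x : ℝ) (hx : ∀ r ∈ R, x ≠ r) :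
    eval x (derivative (R.map fun r => X - C r).prod)
      = eval x ((R.map fun r => X - C r).prod) * (R.map fun r => (x - r)⁻¹).sum := by
  induction R using Multiset.induction_on with
  | empty => simp
  | cons ρ R ih =>
    have hxρ : x - ρ ≠ 0 := sub_ne_zero.mpr (hx ρ (Multiset.mem_cons_self ρ R))
    have hrest := ih (fun r hr => hx r (Multiset.mem_cons_of_mem hr))
    rw [Multiset.map_cons, Multiset.prod_cons, derivative_mul]
    rw [Multiset.map_cons, Multiset.sum_cons]
    simp only [derivative_sub, derivative_X, derivative_C, sub_zero, one_mul, eval_add,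
      eval_mul, eval_sub, eval_X, eval_C, hrest]
    field_simp
    try ring

lemma sum_inv_le (R : Multiset ℝ) (hR : ∀ r ∈ R, 1 ≤ |r|) {x y : ℝ}
    (hx : -1 < x) (hxy : x ≤ y) (hy : y < 1) :
    (R.map fun r => (y - r)⁻¹).sum ≤ (R.map fun r => (x - r)⁻¹).sum := by
  induction R using Multiset.induction_on with
  | empty => simp
  | cons ρ R ih =>
    rw [Multiset.map_cons, Multiset.sum_cons, Multiset.map_cons, Multiset.sum_cons]
    have h2 := ih (fun r hr => hR r (Multiset.mem_cons_of_mem hr))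
    have h1 : (y - ρ)⁻¹ ≤ (x - ρ)⁻¹ := by
      rcases rho_cases (hR ρ (Multiset.mem_cons_self ρ R)) with h | h
      · -- ρ ≥ 1 : x - ρ ≤ y - ρ < 0
        have hy0 : y - ρ < 0 := by linarith
        have hx0 : x - ρ < 0 := by linarith
        exact (inv_le_inv_of_neg hy0 hx0).mpr (by linarith)
      · have hx0 : 0 < x - ρ := by linarith
        have hy0 : 0 < y - ρ := by linarith
        exact inv_anti₀ hx0 (by linarith)
    linarith

lemma sum_inv_lt (R : Multiset ℝ) (hR0 : R ≠ 0) (hR : ∀ r ∈ R, 1 ≤ |r|) {x y : ℝ}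
    (hx : -1 < x) (hxy : x < y) (hy : y < 1) :
    (R.map fun r => (y - r)⁻¹).sum < (R.map fun r => (x - r)⁻¹).sum := by
  induction R using Multiset.induction_on with
  | empty => exact absurd rfl hR0
  | cons ρ R ih =>
    rw [Multiset.map_cons, Multiset.sum_cons, Multiset.map_cons, Multiset.sum_cons]
    have h2 := sum_inv_le R (fun r hr => hR r (Multiset.mem_cons_of_mem hr)) hx hxy.le hy
    have h1 : (y - ρ)⁻¹ < (x - ρ)⁻¹ := by
      rcases rho_cases (hR ρ (Multiset.mem_cons_self ρ R)) with h | h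
      · have hy0 : y - ρ < 0 := by linarith
        have hx0 : x - ρ < 0 := by linarith
        exact (inv_lt_inv_of_neg hy0 hx0).mpr (by linarith)
      · have hx0 : 0 < x - ρ := by linarith
        exact inv_strictAnti₀ hx0 (by linarith)
    linarith


lemma split_real (f : ℝ[X]) (hf : f ≠ 0)
    (hroots : ∀ z : ℂ, aeval z f = 0 → ∃ r : ℝ, z = (r : ℂ) ∧ 1 ≤ |r|) :
    ∃ T : Multiset ℝ, Multiset.card T = f.natDegree ∧ (∀ r ∈ T, 1 ≤ |r|) ∧
      f = C f.leadingCoeff * (T.map fun r => X - C r).prod := by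
  set φ := algebraMap ℝ ℂ
  set fC := f.map φ with hfC
  have hfC0 : fC ≠ 0 := by
    simpa [hfC] using (Polynomial.map_ne_zero hf : f.map φ ≠ 0)
  have hsplit : fC.Splits := IsAlgClosed.splits fC
  have hroot' : ∀ z ∈ fC.roots, (↑z.re : ℂ) = z ∧ 1 ≤ |z.re| := by
    intro z hz
    have hz0 : aeval z f = 0 := by
      have := (mem_roots hfC0).mp hz
      rw [aeval_def, ← eval_map]
      exact this
    obtain ⟨r, hr, hr1⟩ := hroots z hz0
    constructor
    · rw [hr]; simp
    · rw [hr]; simpa using hr1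
  refine ⟨fC.roots.map (fun z => z.re), ?_, ?_, ?_⟩
  · rw [Multiset.card_map]
    rw [(splits_iff_card_roots).mp hsplit, hfC, natDegree_map]
  · intro r hr
    obtain ⟨z, hz, rfl⟩ := Multiset.mem_map.mp hr
    exact (hroot' z hz).2
  · apply Polynomial.map_injective φ (by exact Complex.ofReal_injective)
    have heq := hsplit.eq_prod_roots
    have hlc : φ f.leadingCoeff = fC.leadingCoeff := (leadingCoeff_map φ).symm
    rw [Polynomial.map_mul, map_C, hlc, Polynomial.map_multiset_prod, Multiset.map_map,
      Multiset.map_map]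
    rw [show (Multiset.map ((map φ ∘ fun r => X - C r) ∘ fun z => z.re) fC.roots)
        = Multiset.map (fun a => X - C a) fC.roots from
      Multiset.map_congr rfl (fun z hz => by
        simp only [Function.comp_apply, Polynomial.map_sub, map_X, map_C]
        congr 1
        rw [show φ z.re = ((z.re : ℝ) : ℂ) from rfl, (hroot' z hz).1])]
    exact heq

lemma deriv_nonneg_of_monotoneOn (p : ℝ[X])
    (hmono : MonotoneOn (fun x => p.eval x) (Set.Icc (-1 : ℝ) 1)) :
    ∀ x ∈ Set.Icc (-1 : ℝ) 1, 0 ≤ p.derivative.eval x := by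
  have hIoo : ∀ x ∈ Set.Ioo (-1 : ℝ) 1, 0 ≤ p.derivative.eval x := by
    intro x hx
    have hD : HasDerivAt (fun y => p.eval y) (p.derivative.eval x) x := p.hasDerivAt x
    have hslope : Filter.Tendsto (slope (fun y => p.eval y) x) (nhdsWithin x (Set.Ioi x))
        (nhds (p.derivative.eval x)) := by
      apply (hasDerivAt_iff_tendsto_slope.mp hD).mono_left
      apply nhdsWithin_mono
      intro y hy
      exact ne_of_gt hy
    apply ge_of_tendsto hslope
    filter_upwards [Ioo_mem_nhdsGT_of_mem (Set.left_mem_Ico.mpr hx.2)] with y hy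
    rw [slope_def_field]
    apply div_nonneg
    · have := hmono (Set.mem_Icc.mpr ⟨hx.1.le, hx.2.le⟩)
        (Set.mem_Icc.mpr ⟨(hx.1.trans hy.1).le, hy.2.le⟩) hy.1.le
      simpa using sub_nonneg.mpr this
    · simpa using sub_nonneg.mpr hy.1.le
  have hclosed : IsClosed {x : ℝ | 0 ≤ p.derivative.eval x} :=
    isClosed_le continuous_const (p.derivative.continuous_aeval)
  have : Set.Icc (-1 : ℝ) 1 = closure (Set.Ioo (-1 : ℝ) 1) := (closure_Ioo (by norm_num)).symm
  rw [this]
  intro x hx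
  exact hclosed.closure_subset_iff.mpr hIoo hx


lemma key (n : ℕ) (p : ℝ[X]) (hdeg : p.natDegree ≤ n)
    (hroots : ∀ z : ℂ, aeval z p = 0 → ∃ r : ℝ, z = (r : ℂ) ∧ 1 ≤ |r|)
    (hmono : MonotoneOn (fun x => p.eval x) (Set.Icc (-1 : ℝ) 1))
    (hpos : ∀ x ∈ Set.Ioo (-1 : ℝ) 1, 0 < p.eval x) :
    ∀ x₀ ∈ Set.Icc (-1 : ℝ) 1, p.derivative.eval x₀ ≤ ((n : ℝ) / 2) * p.eval 1 := by
  have h0mem : (0 : ℝ) ∈ Set.Ioo (-1 : ℝ) 1 := by constructor <;> norm_num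
  have hp0 : p ≠ 0 := by
    intro h
    have := hpos 0 h0mem
    rw [h] at this; simp at this
  have hp1pos : 0 < p.eval 1 := by
    have h01 : p.eval 0 ≤ p.eval 1 := hmono (by constructor <;> norm_num)
      (by constructor <;> norm_num) (by norm_num)
    have := hpos 0 h0mem
    linarith
  by_cases hq0 : derivative p = 0
  · intro x₀ _
    rw [hq0]
    simp only [eval_zero]
    positivity
  have hnd : p.natDegree ≠ 0 := by
    intro h
    exact hq0 (by rw [eq_C_of_natDegree_eq_zero h]; simp)
  obtain ⟨T, hTcard, hT1, hfac⟩ := split_real p hp0 hroots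
  have hqnn := deriv_nonneg_of_monotoneOn p hmono
  have hlc0 : p.leadingCoeff ≠ 0 := leadingCoeff_ne_zero.mpr hp0
  have hT0 : T ≠ 0 := by
    rintro rfl
    simp at hTcard
    exact hnd hTcard.symm
  have hS : ∀ y ∈ Set.Ioo (-1 : ℝ) 1,
      eval y (derivative p) = eval y p * (T.map fun r => (y - r)⁻¹).sum := by
    intro y hy
    have hyne : ∀ r ∈ T, y ≠ r := by
      intro r hr h
      have := hT1 r hr
      rcases abs_cases r with ⟨h1, _⟩ | ⟨h1, _⟩ <;>
        (rw [← h] at this; rcases abs_cases y with ⟨h2, _⟩ | ⟨h2, _⟩ <;>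
          (rcases hy with ⟨hy1, hy2⟩; linarith))
    conv_lhs => rw [hfac, derivative_C_mul]
    rw [eval_mul, eval_C, eval_deriv_prod T y hyne]
    conv_rhs => rw [hfac]
    rw [eval_mul, eval_C]
    ring
  have hqpos : ∀ θ ∈ Set.Ioo (-1 : ℝ) 1, 0 < eval θ (derivative p) := by
    intro θ hθ
    rcases lt_or_eq_of_le (hqnn θ ⟨hθ.1.le, hθ.2.le⟩) with h | h
    · exact h
    exfalso
    have hSθ : (T.map fun r => (θ - r)⁻¹).sum = 0 := by
      have := hS θ hθ
      rw [← h] at this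
      have hpθ := hpos θ hθ
      have := this.symm
      rcases mul_eq_zero.mp this with h' | h'
      · exact absurd h' (ne_of_gt hpθ)
      · exact h'
    set θ' := (θ + 1) / 2 with hθ'def
    have hθ'mem : θ' ∈ Set.Ioo (-1 : ℝ) 1 := by
      constructor <;> (rcases hθ with ⟨h1, h2⟩; rw [hθ'def]; linarith)
    have hlt := sum_inv_lt T hT0 hT1 hθ.1 (show θ < θ' by rw [hθ'def]; linarith [hθ.2]) hθ'mem.2
    rw [hSθ] at hlt
    have : eval θ' (derivative p) < 0 := by
      rw [hS θ' hθ'mem]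
      exact mul_neg_of_pos_of_neg (hpos θ' hθ'mem) hlt
    linarith [hqnn θ' ⟨hθ'mem.1.le, hθ'mem.2.le⟩]
  -- root counting for the derivative
  have hproots : p.roots = T := by
    conv_lhs => rw [hfac]
    rw [roots_C_mul _ hlc0, roots_multiset_prod_X_sub_C]
  have h1 : Multiset.card (derivative p).roots ≤ (derivative p).natDegree := card_roots' _
  have h2 : p.natDegree ≤ Multiset.card (derivative p).roots + 1 := by
    rw [← hTcard, ← hproots]
    exact p.card_roots_le_derivative
  have h3 : (derivative p).natDegree < p.natDegree := natDegree_derivative_lt hnd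
  have hcardq : Multiset.card (derivative p).roots = (derivative p).natDegree := by omega
  have hd'n : Multiset.card (derivative p).roots + 1 ≤ n := by omega
  have hqfac := (splits_iff_card_roots.mpr hcardq).eq_prod_roots
  set R := (derivative p).roots with hRdef
  set d' := Multiset.card R with hd'def
  have hR1 : ∀ ρ ∈ R, 1 ≤ |ρ| := by
    intro ρ hρ
    by_contra hc
    push_neg at hc
    have hρIoo : ρ ∈ Set.Ioo (-1 : ℝ) 1 := by
      rcases abs_lt.mp hc with ⟨ha, hb⟩
      exact ⟨ha, hb⟩
    have := hqpos ρ hρIoo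
    have hroot : eval ρ (derivative p) = 0 := by
      have := (mem_roots hq0).mp hρ
      exact this
    linarith [hroot ▸ this]
  obtain ⟨K, hK⟩ := exists_repr R (derivative p).leadingCoeff
  have hKq : ∀ x : ℝ, eval x (derivative p) = K * pprod R x := by
    intro x
    conv_lhs => rw [hqfac]
    exact hK x
  have hKpos : 0 < K := by
    have hpp := pprod_pos hR1 (show (-1:ℝ) < 0 by norm_num) (show (0:ℝ) < 1 by norm_num)
    have h := hqpos 0 h0mem
    rw [hKq] at h
    nlinarith
  -- reduce to interior points
  suffices hIoo : ∀ x₀ ∈ Set.Ioo (-1 : ℝ) 1, eval x₀ (derivative p) ≤ ((n : ℝ) / 2) * p.eval 1 by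
    have hclosed : IsClosed {x : ℝ | eval x (derivative p) ≤ ((n : ℝ) / 2) * p.eval 1} :=
      isClosed_le (derivative p).continuous_aeval continuous_const
    intro x₀ hx₀
    have : Set.Icc (-1 : ℝ) 1 ⊆ {x : ℝ | eval x (derivative p) ≤ ((n : ℝ) / 2) * p.eval 1} := by
      rw [← closure_Ioo (show (-1:ℝ) ≠ 1 by norm_num)]
      exact hclosed.closure_subset_iff.mpr hIoo
    exact this hx₀
  intro x₀ hx₀
  obtain ⟨hx1, hx2⟩ := hx₀
  have RA : ∀ y, x₀ ≤ y → y ≤ 1 →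
      (1 - y) ^ d' * eval x₀ (derivative p) ≤ (1 - x₀) ^ d' * eval y (derivative p) := by
    intro y hy1 hy2
    rw [hKq, hKq]
    have h := pprod_right hR1 hx1.le hy1 hy2
    calc (1 - y) ^ d' * (K * pprod R x₀) = K * ((1 - y) ^ d' * pprod R x₀) := by ring
      _ ≤ K * ((1 - x₀) ^ d' * pprod R y) := mul_le_mul_of_nonneg_left h hKpos.le
      _ = (1 - x₀) ^ d' * (K * pprod R y) := by ring
  have RB : ∀ y, -1 ≤ y → y ≤ x₀ →
      (1 + y) ^ d' * eval x₀ (derivative p) ≤ (1 + x₀) ^ d' * eval y (derivative p) := by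
    intro y hy1 hy2
    rw [hKq, hKq]
    have h := pprod_left hR1 hy1 hy2 hx2.le
    calc (1 + y) ^ d' * (K * pprod R x₀) = K * ((1 + y) ^ d' * pprod R x₀) := by ring
      _ ≤ K * ((1 + x₀) ^ d' * pprod R y) := mul_le_mul_of_nonneg_left h hKpos.le
      _ = (1 + x₀) ^ d' * (K * pprod R y) := by ring
  -- EST1
  set q₀ := eval x₀ (derivative p) with hq₀def
  have EST1 : q₀ * (1 - x₀) ≤ ((d' : ℝ) + 1) * (p.eval 1 - p.eval x₀) := by
    set F : ℝ → ℝ := fun y => ((d' : ℝ) + 1) * (1 - x₀) ^ d' * eval y p + q₀ * (1 - y) ^ (d' + 1)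
      with hFdef
    have hder : ∀ y : ℝ, HasDerivAt F
        (((d' : ℝ) + 1) * (1 - x₀) ^ d' * eval y (derivative p)
          + q₀ * (-(((d' : ℝ) + 1) * (1 - y) ^ d'))) y := by
      intro y
      have h1 : HasDerivAt (fun y : ℝ => eval y p) (eval y (derivative p)) y := p.hasDerivAt y
      have hb : HasDerivAt (fun y : ℝ => 1 - y) (-1) y := (hasDerivAt_id y).const_sub 1
      have h2 := hb.fun_pow (d' + 1)
      have h2' : HasDerivAt (fun y : ℝ => (1 - y) ^ (d' + 1))
          (-(((d' : ℝ) + 1) * (1 - y) ^ d')) y := by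
        refine h2.congr_deriv ?_
        simp only [Nat.add_sub_cancel]
        push_cast
        ring
      exact ((h1.const_mul (((d' : ℝ) + 1) * (1 - x₀) ^ d')).add (h2'.const_mul q₀))
    have hFmono : MonotoneOn F (Set.Icc x₀ 1) := by
      apply monotoneOn_of_deriv_nonneg (convex_Icc x₀ 1)
      · exact fun y _ => ((hder y).continuousAt).continuousWithinAt
      · exact fun y _ => ((hder y).differentiableAt).differentiableWithinAt
      · intro y hy
        rw [interior_Icc] at hy
        rw [(hder y).deriv]
        have := RA y hy.1.le hy.2.le
        nlinarith [this]
    have hle := hFmono (Set.left_mem_Icc.mpr hx2.le) (Set.right_mem_Icc.mpr hx2.le) hx2.le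
    rw [hFdef] at hle
    simp only [sub_self, zero_pow (Nat.succ_ne_zero d'), mul_zero, add_zero] at hle
    have hApos : (0 : ℝ) < (1 - x₀) ^ d' := pow_pos (by linarith) d'
    have hkey : (1 - x₀) ^ d' * (((d' : ℝ) + 1) * eval x₀ p + q₀ * (1 - x₀))
        ≤ (1 - x₀) ^ d' * (((d' : ℝ) + 1) * eval 1 p) := by
      rw [pow_succ] at hle
      nlinarith [hle]
    have := le_of_mul_le_mul_left hkey hApos
    linarith
  -- EST2
  have EST2 : q₀ * (1 + x₀) ≤ ((d' : ℝ) + 1) * (p.eval x₀ - p.eval (-1)) := by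
    set G : ℝ → ℝ := fun y => ((d' : ℝ) + 1) * (1 + x₀) ^ d' * eval y p - q₀ * (1 + y) ^ (d' + 1)
      with hGdef
    have hder : ∀ y : ℝ, HasDerivAt G
        (((d' : ℝ) + 1) * (1 + x₀) ^ d' * eval y (derivative p)
          - q₀ * (((d' : ℝ) + 1) * (1 + y) ^ d')) y := by
      intro y
      have h1 : HasDerivAt (fun y : ℝ => eval y p) (eval y (derivative p)) y := p.hasDerivAt y
      have hb : HasDerivAt (fun y : ℝ => 1 + y) 1 y := (hasDerivAt_id y).const_add 1
      have h2 := hb.fun_pow (d' + 1)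
      have h2' : HasDerivAt (fun y : ℝ => (1 + y) ^ (d' + 1))
          (((d' : ℝ) + 1) * (1 + y) ^ d') y := by
        refine h2.congr_deriv ?_
        simp only [Nat.add_sub_cancel]
        push_cast
        ring
      exact ((h1.const_mul (((d' : ℝ) + 1) * (1 + x₀) ^ d')).sub (h2'.const_mul q₀))
    have hGmono : MonotoneOn G (Set.Icc (-1) x₀) := by
      apply monotoneOn_of_deriv_nonneg (convex_Icc (-1) x₀)
      · exact fun y _ => ((hder y).continuousAt).continuousWithinAt
      · exact fun y _ => ((hder y).differentiableAt).differentiableWithinAt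
      · intro y hy
        rw [interior_Icc] at hy
        rw [(hder y).deriv]
        have := RB y hy.1.le hy.2.le
        nlinarith [this]
    have hle := hGmono (Set.left_mem_Icc.mpr hx1.le) (Set.right_mem_Icc.mpr hx1.le) hx1.le
    rw [hGdef] at hle
    simp only [add_neg_cancel, zero_pow (Nat.succ_ne_zero d'), mul_zero, sub_zero] at hle
    have hApos : (0 : ℝ) < (1 + x₀) ^ d' := pow_pos (by linarith) d'
    have hkey : (1 + x₀) ^ d' * (((d' : ℝ) + 1) * eval (-1) p)
        ≤ (1 + x₀) ^ d' * (((d' : ℝ) + 1) * eval x₀ p - q₀ * (1 + x₀)) := by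
      rw [pow_succ] at hle
      nlinarith [hle]
    have := le_of_mul_le_mul_left hkey hApos
    linarith
  -- conclusion
  have hpm1 : 0 ≤ p.eval (-1) := by
    have hclosed : IsClosed {x : ℝ | 0 ≤ eval x p} :=
      isClosed_le continuous_const p.continuous_aeval
    have : Set.Icc (-1 : ℝ) 1 ⊆ {x : ℝ | 0 ≤ eval x p} := by
      rw [← closure_Ioo (show (-1:ℝ) ≠ 1 by norm_num)]
      exact hclosed.closure_subset_iff.mpr (fun x hx => (hpos x hx).le)
    exact this (by constructor <;> norm_num)
  have hd'n' : ((d' : ℝ) + 1) ≤ (n : ℝ) := by exact_mod_cast hd'n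
  have hmono11 : p.eval (-1) ≤ p.eval 1 :=
    hmono (by constructor <;> norm_num) (by constructor <;> norm_num) (by norm_num)
  nlinarith [EST1, EST2, hpm1, hd'n', hmono11, hp1pos]


lemma pos_on_Ioo (f : ℝ[X]) (hne : ∀ x ∈ Set.Ioo (-1 : ℝ) 1, eval x f ≠ 0)
    (h0 : 0 < eval 0 f) : ∀ x ∈ Set.Ioo (-1 : ℝ) 1, 0 < eval x f := by
  intro x hx
  rcases lt_trichotomy (eval x f) 0 with h | h | h
  · exfalso
    rcases le_or_gt x 0 with hx0 | hx0
    · have hIVT := intermediate_value_Icc hx0 ((f.continuous_aeval).continuousOn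
        (s := Set.Icc x 0))
      have h0mem : (0 : ℝ) ∈ Set.Icc (eval x f) (eval 0 f) := ⟨h.le, h0.le⟩
      obtain ⟨c, hc, hc0⟩ := hIVT h0mem
      exact hne c ⟨lt_of_lt_of_le hx.1 hc.1, lt_of_le_of_lt hc.2 (by norm_num)⟩ hc0
    · have hIVT := intermediate_value_Icc' hx0.le ((f.continuous_aeval).continuousOn
        (s := Set.Icc 0 x))
      have h0mem : (0 : ℝ) ∈ Set.Icc (eval x f) (eval 0 f) := ⟨h.le, h0.le⟩
      obtain ⟨c, hc, hc0⟩ := hIVT h0mem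
      exact hne c ⟨lt_of_lt_of_le (by norm_num) hc.1, lt_of_le_of_lt hc.2 hx.2⟩ hc0
  · exact absurd h (hne x hx)
  · exact h

lemma main_mono (n : ℕ) (f : ℝ[X]) (hdeg : f.natDegree ≤ n)
    (hroots : ∀ z : ℂ, aeval z f = 0 → ∃ r : ℝ, z = (r : ℂ) ∧ 1 ≤ |r|)
    (hmono : MonotoneOn (fun x => f.eval x) (Set.Icc (-1 : ℝ) 1)) :
    ∀ x₀ ∈ Set.Icc (-1 : ℝ) 1,
      |f.derivative.eval x₀| ≤ ((n : ℝ) / 2) * max |f.eval 1| |f.eval (-1)| := by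
  have hf0 : f ≠ 0 := by
    rintro rfl
    obtain ⟨r, hr, _⟩ := hroots Complex.I (by simp)
    have := congrArg Complex.im hr
    simp at this
  have hne : ∀ x ∈ Set.Ioo (-1 : ℝ) 1, eval x f ≠ 0 := by
    intro x hx h
    have haev : aeval ((x : ℝ) : ℂ) f = 0 := by
      rw [show ((x : ℝ) : ℂ) = algebraMap ℝ ℂ x from rfl, aeval_algebraMap_apply]
      simp [h]
    obtain ⟨r, hr, hr1⟩ := hroots _ haev
    have : x = r := by exact_mod_cast hr
    rw [← this] at hr1
    rcases abs_lt.mp (show |x| < 1 from abs_lt.mpr ⟨hx.1, hx.2⟩) with _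
    have : |x| < 1 := abs_lt.mpr ⟨hx.1, hx.2⟩
    linarith
  intro x₀ hx₀
  have hd0 : 0 ≤ f.derivative.eval x₀ := deriv_nonneg_of_monotoneOn f hmono x₀ hx₀
  rw [abs_of_nonneg hd0]
  have hn2 : (0 : ℝ) ≤ (n : ℝ) / 2 := by positivity
  have hf00 : eval 0 f ≠ 0 := hne 0 (by constructor <;> norm_num)
  rcases hf00.lt_or_gt with hneg | hpos
  · -- f < 0 on Ioo; use g = -(f.comp (-X))
    set g : ℝ[X] := -(f.comp (-X)) with hgdef
    have hgeval : ∀ x : ℝ, g.eval x = -f.eval (-x) := by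
      intro x; rw [hgdef]; simp [eval_comp]
    have hfneg : ∀ x ∈ Set.Ioo (-1 : ℝ) 1, eval x f < 0 := by
      have := pos_on_Ioo (-f) (by intro x hx h; exact hne x hx (by simpa using h))
        (by simpa using hneg)
      intro x hx
      have := this x hx
      simp at this
      linarith
    have hgpos : ∀ x ∈ Set.Ioo (-1 : ℝ) 1, 0 < g.eval x := by
      intro x hx
      rw [hgeval]
      have : -x ∈ Set.Ioo (-1 : ℝ) 1 := ⟨by linarith [hx.2], by linarith [hx.1]⟩
      linarith [hfneg (-x) this]
    have hgmono : MonotoneOn (fun x => g.eval x) (Set.Icc (-1 : ℝ) 1) := by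
      intro a ha b hb hab
      simp only [hgeval]
      have h1 : -b ∈ Set.Icc (-1 : ℝ) 1 := ⟨by linarith [hb.2], by linarith [hb.1]⟩
      have h2 : -a ∈ Set.Icc (-1 : ℝ) 1 := ⟨by linarith [ha.2], by linarith [ha.1]⟩
      have := hmono h1 h2 (by linarith)
      linarith
    have hgdeg : g.natDegree ≤ n := by
      rw [hgdef, natDegree_neg, natDegree_comp]
      simp only [natDegree_neg, natDegree_X, mul_one]
      exact hdeg
    have hgroots : ∀ z : ℂ, aeval z g = 0 → ∃ r : ℝ, z = (r : ℂ) ∧ 1 ≤ |r| := by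
      intro z hz
      rw [hgdef] at hz
      simp only [map_neg, neg_eq_zero, aeval_comp] at hz
      have : aeval (-z) f = 0 := by
        convert hz using 2
        simp
      obtain ⟨r, hr, hr1⟩ := hroots _ this
      refine ⟨-r, ?_, by simpa using hr1⟩
      have : z = -(r : ℂ) := by rw [← hr]; ring
      simpa using this
    have hgderiv : ∀ x : ℝ, g.derivative.eval x = f.derivative.eval (-x) := by
      intro x
      rw [hgdef]
      rw [derivative_neg, derivative_comp]
      simp [eval_comp]
    have hx₀' : -x₀ ∈ Set.Icc (-1 : ℝ) 1 := ⟨by linarith [hx₀.2], by linarith [hx₀.1]⟩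
    have := key n g hgdeg hgroots hgmono hgpos (-x₀) hx₀'
    rw [hgderiv, neg_neg] at this
    have hg1 : g.eval 1 = -f.eval (-1) := hgeval 1
    rw [hg1] at this
    calc f.derivative.eval x₀ ≤ ((n : ℝ) / 2) * (-f.eval (-1)) := this
      _ ≤ ((n : ℝ) / 2) * max |f.eval 1| |f.eval (-1)| := by
          apply mul_le_mul_of_nonneg_left _ hn2
          exact le_trans (neg_le_abs _) (le_max_right _ _)
  · -- f > 0 on Ioo
    have hfpos := pos_on_Ioo f hne hpos
    have := key n f hdeg hroots hmono hfpos x₀ hx₀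
    calc f.derivative.eval x₀ ≤ ((n : ℝ) / 2) * f.eval 1 := this
      _ ≤ ((n : ℝ) / 2) * max |f.eval 1| |f.eval (-1)| := by
          apply mul_le_mul_of_nonneg_left _ hn2
          exact le_trans (le_abs_self _) (le_max_left _ _)

end MarkovAux

open MarkovAux in
theorem markov_monotone_real_zeros (n : ℕ) (hn : 0 < n)
    (f : Polynomial ℝ) (hdeg : f.natDegree ≤ n)
    (hmono : MonotoneOn (fun x => f.eval x) (Set.Icc (-1 : ℝ) 1) ∨
      AntitoneOn (fun x => f.eval x) (Set.Icc (-1 : ℝ) 1))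
    (hroots : ∀ z : ℂ, Polynomial.aeval z f = 0 → ∃ r : ℝ, z = (r : ℂ) ∧ 1 ≤ |r|) :
    (⨆ x : Set.Icc (-1 : ℝ) 1, |f.derivative.eval (x : ℝ)|) ≤
      ((n : ℝ) / 2) * ⨆ x : Set.Icc (-1 : ℝ) 1, |f.eval (x : ℝ)| := by
  haveI : Nonempty (Set.Icc (-1 : ℝ) 1) := ⟨⟨0, by constructor <;> norm_num⟩⟩
  have hn2 : (0 : ℝ) ≤ (n : ℝ) / 2 := by positivity
  have hbdd : BddAbove (Set.range fun x : Set.Icc (-1 : ℝ) 1 => |f.eval (x : ℝ)|) := by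
    have himg : BddAbove ((fun y => |f.eval y|) '' Set.Icc (-1 : ℝ) 1) :=
      (isCompact_Icc.image (f.continuous.abs)).bddAbove
    rwa [Set.image_eq_range] at himg
  have hM : ∀ y ∈ Set.Icc (-1 : ℝ) 1, |f.eval y| ≤ ⨆ x : Set.Icc (-1 : ℝ) 1, |f.eval (x : ℝ)| :=
    fun y hy => le_ciSup hbdd ⟨y, hy⟩
  have hmaxle : max |f.eval 1| |f.eval (-1)| ≤ ⨆ x : Set.Icc (-1 : ℝ) 1, |f.eval (x : ℝ)| :=
    max_le (hM 1 (by constructor <;> norm_num)) (hM (-1) (by constructor <;> norm_num))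
  apply ciSup_le
  intro x
  have hbound : |f.derivative.eval (x : ℝ)| ≤ ((n : ℝ) / 2) * max |f.eval 1| |f.eval (-1)| := by
    rcases hmono with hm | ha
    · exact main_mono n f hdeg hroots hm x x.2
    · have hgmono : MonotoneOn (fun x => (-f).eval x) (Set.Icc (-1 : ℝ) 1) := by
        intro a haa b hbb hab
        simp only [eval_neg, neg_le_neg_iff]
        exact ha haa hbb hab
      have hgroots : ∀ z : ℂ, aeval z (-f) = 0 → ∃ r : ℝ, z = (r : ℂ) ∧ 1 ≤ |r| := by
        intro z hz
        apply hroots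
        simpa using hz
      have hgdeg : (-f).natDegree ≤ n := by rwa [natDegree_neg]
      have := main_mono n (-f) hgdeg hgroots hgmono x x.2
      simpa using this
  exact le_trans hbound (mul_le_mul_of_nonneg_left hmaxle hn2)
end

section
/- Let d be a nonnegative integer, q > 0, and f ∈ B_d(-1,1), i.e., f(x) = Σ_{j=0}^d a_j (1-x)^j (x+1)^{d-j} with a_j ≥ 0. For every y ∈ [-1,1], f(y)^q ≤ (qd+1)/(y+1) ∫_{-1}^y f(x)^q dx whenever y > -1, and f(y)^q ≤ (qd+1)/(1-y) ∫_y^1 f(x)^q dx whenever y < 1. -/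
open Finset

lemma left_nik (d : ℕ) (q : ℝ) (hq : 0 < q)
    (f : ℝ → ℝ) (A : ℕ → ℝ) (hA : ∀ j ≤ d, 0 ≤ A j)
    (hf : ∀ x : ℝ, f x = ∑ j ∈ range (d + 1), A j * (1 - x) ^ j * (x + 1) ^ (d - j))
    (y : ℝ) (hy1 : -1 < y) (hy2 : y ≤ 1) :
    f y ^ q ≤ ((q * d + 1) / (y + 1)) * ∫ x in (-1 : ℝ)..y, f x ^ q := by
  set p : ℝ := q * d with hp_def
  have hp : 0 ≤ p := by positivity
  have hyp : (0:ℝ) < y + 1 := by linarith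
  have hfnn : ∀ x ∈ Set.Icc (-1:ℝ) 1, 0 ≤ f x := by
    intro x hx
    rw [hf]
    apply Finset.sum_nonneg
    intro j hj
    have := hA j (Nat.lt_succ_iff.mp (Finset.mem_range.mp hj))
    have h1 : (0:ℝ) ≤ 1 - x := by linarith [hx.2]
    have h2 : (0:ℝ) ≤ x + 1 := by linarith [hx.1]
    positivity
  have hfy : 0 ≤ f y := hfnn y ⟨hy1.le, hy2⟩
  -- pointwise bound with natural powers
  have hpoint : ∀ x ∈ Set.Icc (-1:ℝ) y, f y * ((x+1)/(y+1))^d ≤ f x := by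
    intro x hx
    set t : ℝ := (x+1)/(y+1) with ht_def
    have ht0 : 0 ≤ t := by
      apply div_nonneg _ hyp.le; linarith [hx.1]
    have ht1 : t ≤ 1 := by
      rw [div_le_one hyp]; linarith [hx.2]
    have htx : (y+1) * t = x + 1 := by
      rw [ht_def]; field_simp
    rw [hf y, hf x, Finset.sum_mul]
    apply Finset.sum_le_sum
    intro j hj
    have hj' := Nat.lt_succ_iff.mp (Finset.mem_range.mp hj)
    have hAj := hA j hj'
    have hx1 : (0:ℝ) ≤ x + 1 := by linarith [hx.1]
    have h1y : (0:ℝ) ≤ 1 - y := by linarith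
    have h1x : (1:ℝ) - y ≤ 1 - x := by linarith [hx.2]
    have hkey : (x+1)^(d-j) = (y+1)^(d-j) * t^(d-j) := by
      rw [← mul_pow, htx]
    rw [hkey]
    have htpow : t ^ d ≤ t ^ (d - j) := pow_le_pow_of_le_one ht0 ht1 (Nat.sub_le d j)
    have h1x0 : (0:ℝ) ≤ 1 - x := by linarith
    calc A j * (1 - y) ^ j * (y + 1) ^ (d - j) * t ^ d
        ≤ A j * (1 - x) ^ j * (y + 1) ^ (d - j) * t ^ (d-j) := by
          have e1 : (1 - y) ^ j ≤ (1 - x) ^ j := pow_le_pow_left₀ h1y h1x j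
          have hy1p : (0:ℝ) ≤ (y+1)^(d-j) := by positivity
          apply mul_le_mul _ htpow (by positivity)
          · exact mul_nonneg (mul_nonneg hAj (by positivity)) hy1p
          · exact mul_le_mul_of_nonneg_right (mul_le_mul_of_nonneg_left e1 hAj) hy1p
      _ = A j * (1 - x) ^ j * ((y + 1) ^ (d - j) * t ^ (d-j)) := by ring
  -- rpow pointwise bound
  have hrpow : ∀ x ∈ Set.Icc (-1:ℝ) y, f y ^ q * ((x+1)/(y+1)) ^ p ≤ f x ^ q := by
    intro x hx
    set t : ℝ := (x+1)/(y+1) with ht_def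
    have ht0 : 0 ≤ t := div_nonneg (by linarith [hx.1]) hyp.le
    have h1 : (f y * t ^ d) ^ q ≤ f x ^ q :=
      Real.rpow_le_rpow (by positivity) (hpoint x hx) hq.le
    calc f y ^ q * t ^ p = (f y * t ^ d) ^ q := by
          rw [Real.mul_rpow hfy (by positivity), ← Real.rpow_natCast t d,
            ← Real.rpow_mul ht0, hp_def, mul_comm q (d:ℝ)]
      _ ≤ f x ^ q := h1
  -- continuity / integrability
  have hcf : Continuous f := by
    have : f = fun x => ∑ j ∈ range (d + 1), A j * (1 - x) ^ j * (x + 1) ^ (d - j) :=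
      funext hf
    rw [this]
    exact continuous_finset_sum _ fun j _ => by fun_prop
  have hcq : Continuous (fun v : ℝ => v ^ q) := Real.continuous_rpow_const hq.le
  have hI1 : IntervalIntegrable (fun x => f x ^ q) MeasureTheory.volume (-1) y :=
    (hcq.comp hcf).intervalIntegrable _ _
  have hcp : Continuous (fun u : ℝ => u ^ p) := Real.continuous_rpow_const hp
  have hI2 : IntervalIntegrable (fun x => f y ^ q * ((x+1)/(y+1)) ^ p)
      MeasureTheory.volume (-1) y := by
    apply Continuous.intervalIntegrable
    fun_prop
  -- integral comparison
  have hmono : (∫ x in (-1:ℝ)..y, f y ^ q * ((x+1)/(y+1)) ^ p)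
      ≤ ∫ x in (-1:ℝ)..y, f x ^ q :=
    intervalIntegral.integral_mono_on (by linarith) hI2 hI1 hrpow
  -- compute the left integral
  have hcalc : (∫ x in (-1:ℝ)..y, ((x+1)/(y+1)) ^ p) = (y+1) / (p+1) := by
    have h1 : (∫ x in (-1:ℝ)..y, ((x+1)/(y+1)) ^ p)
        = ∫ x in (0:ℝ)..(y+1), (x/(y+1)) ^ p := by
      have := intervalIntegral.integral_comp_add_right
        (fun u : ℝ => (u/(y+1)) ^ p) 1 (a := (-1:ℝ)) (b := y)
      simpa using this
    rw [h1]
    have h2 := intervalIntegral.integral_comp_div (fun u : ℝ => u ^ p)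
      (ne_of_gt hyp) (a := (0:ℝ)) (b := y+1)
    rw [h2, zero_div, div_self (ne_of_gt hyp)]
    beta_reduce
    rw [integral_rpow (Or.inl (by linarith)), Real.one_rpow,
      Real.zero_rpow (by positivity), smul_eq_mul]
    ring
  have hInt : (∫ x in (-1:ℝ)..y, f y ^ q * ((x+1)/(y+1)) ^ p)
      = f y ^ q * ((y+1)/(p+1)) := by
    rw [intervalIntegral.integral_const_mul, hcalc]
  have hfinal : f y ^ q * ((y+1)/(p+1)) ≤ ∫ x in (-1:ℝ)..y, f x ^ q := hInt ▸ hmono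
  have hp1 : (0:ℝ) < p + 1 := by linarith
  calc f y ^ q = ((p+1)/(y+1)) * (f y ^ q * ((y+1)/(p+1))) := by
        field_simp
      _ ≤ ((p+1)/(y+1)) * ∫ x in (-1:ℝ)..y, f x ^ q := by
        apply mul_le_mul_of_nonneg_left hfinal
        positivity

theorem pointwise_nikolskii (d : ℕ) (q : ℝ) (hq : 0 < q)
    (f : ℝ → ℝ) (A : ℕ → ℝ) (hA : ∀ j ≤ d, 0 ≤ A j)
    (hf : ∀ x : ℝ, f x = ∑ j ∈ range (d + 1), A j * (1 - x) ^ j * (x + 1) ^ (d - j)) :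
    ∀ y ∈ Set.Icc (-1 : ℝ) 1,
      (-1 < y → f y ^ q ≤ ((q * d + 1) / (y + 1)) * ∫ x in (-1 : ℝ)..y, f x ^ q) ∧
      (y < 1 → f y ^ q ≤ ((q * d + 1) / (1 - y)) * ∫ x in y..(1 : ℝ), f x ^ q) := by
  intro y hy
  constructor
  · intro hy1
    exact left_nik d q hq f A hA hf y hy1 hy.2
  · intro hy1
    set g : ℝ → ℝ := fun x => f (-x) with hg_def
    have hgB : ∀ x : ℝ, g x = ∑ j ∈ range (d + 1),
        (fun j => A (d - j)) j * (1 - x) ^ j * (x + 1) ^ (d - j) := by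
      intro x
      have := hf (-x)
      rw [hg_def]
      simp only [this]
      rw [← Finset.sum_range_reflect]
      apply Finset.sum_congr rfl
      intro j hj
      have hj' := Nat.lt_succ_iff.mp (Finset.mem_range.mp hj)
      have e1 : d + 1 - 1 - j = d - j := by omega
      have e2 : d - (d - j) = j := by omega
      rw [e1, e2]
      ring_nf
    have hB : ∀ j ≤ d, 0 ≤ (fun j => A (d - j)) j := fun j _ => hA (d - j) (Nat.sub_le d j)
    have := left_nik d q hq g (fun j => A (d - j)) hB hgB (-y)
      (by linarith) (by linarith [hy.1])
    have hgy : g (-y) = f y := by rw [hg_def]; simp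
    have hint : (∫ x in (-1:ℝ)..(-y), g x ^ q) = ∫ x in y..(1:ℝ), f x ^ q := by
      have := intervalIntegral.integral_comp_neg (a := (-1:ℝ)) (b := -y)
        (fun x => f x ^ q)
      simpa [hg_def] using this
    rw [hgy, hint] at this
    have : f y ^ q ≤ (q * ↑d + 1) / (-y + 1) * ∫ (x : ℝ) in y..1, f x ^ q := this
    convert this using 3
    ring
end
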